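/- arXiv:1408.5817 — 4 statements merged into one kernel-verified Lean document; each statement's English description precedes it below -/
import Mathlib

section
/- Let K be a field, let q ∈ K be nonzero, and let z ∈ K. For all n ≥ 1, Σ_{σ∈𝔖_n} q^{inv(σ)} · Π_{i∈Asc(σ)} (1 + z·q^{−inv^{□,i+1}(σ)}) = Σ_{σ∈𝔖_n} q^{inv(σ)} · Π_{i∈Des(σ)} (1 + z·q^{−(1 + inv^{□,i}(σ))}). -/
open Finset

/-- One-line notation: `oneline σ i` is the value σ_i ∈ {1,…,n} at position i ∈ {1,…,n}. -/
def oneline {n : ℕ} (σ : Equiv.Perm (Fin n)) (i : ℕ) : ℕ :=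
  if h : 1 ≤ i ∧ i ≤ n then (σ ⟨i - 1, by omega⟩ : ℕ) + 1 else 0

/-- The descent set Des(σ) = {i ∈ {1,…,n−1} : σ_i > σ_{i+1}}. -/
def DesSet {n : ℕ} (σ : Equiv.Perm (Fin n)) : Finset ℕ :=
  (Finset.Icc 1 (n - 1)).filter fun i => oneline σ (i + 1) < oneline σ i

/-- The ascent set Asc(σ) = {i ∈ {1,…,n−1} : σ_i < σ_{i+1}}. -/
def AscSet {n : ℕ} (σ : Equiv.Perm (Fin n)) : Finset ℕ :=
  (Finset.Icc 1 (n - 1)).filter fun i => oneline σ i < oneline σ (i + 1)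

/-- maj(σ) = Σ_{i ∈ Des(σ)} i. -/
def majNum {n : ℕ} (σ : Equiv.Perm (Fin n)) : ℕ := ∑ i ∈ DesSet σ, i

/-- des(σ) = |Des(σ)|. -/
def desNum {n : ℕ} (σ : Equiv.Perm (Fin n)) : ℕ := (DesSet σ).card

/-- inv(σ) = #{(i,j) : 1 ≤ i < j ≤ n, σ_i > σ_j}. -/
def invNum {n : ℕ} (σ : Equiv.Perm (Fin n)) : ℕ :=
  ((Finset.Icc 1 n ×ˢ Finset.Icc 1 n).filter fun p =>
    p.1 < p.2 ∧ oneline σ p.2 < oneline σ p.1).card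

/-- coinv(σ) = #{(i,j) : 1 ≤ i < j ≤ n, σ_i < σ_j}. -/
def coinvNum {n : ℕ} (σ : Equiv.Perm (Fin n)) : ℕ :=
  ((Finset.Icc 1 n ×ˢ Finset.Icc 1 n).filter fun p =>
    p.1 < p.2 ∧ oneline σ p.1 < oneline σ p.2).card

/-- inv^{□,j}(σ) = #{i : 1 ≤ i < j, σ_i > σ_j}, inversions ending at position j. -/
def invEnd {n : ℕ} (σ : Equiv.Perm (Fin n)) (j : ℕ) : ℕ :=
  ((Finset.Icc 1 n).filter fun i => i < j ∧ oneline σ j < oneline σ i).card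

/-- inv^{i,□}(σ) = #{j : i < j ≤ n, σ_i > σ_j}, inversions starting at position i. -/
def invStart {n : ℕ} (σ : Equiv.Perm (Fin n)) (i : ℕ) : ℕ :=
  ((Finset.Icc 1 n).filter fun j => i < j ∧ oneline σ j < oneline σ i).card

/-- [m]_q = 1 + q + ⋯ + q^{m−1}. -/
def qnum {R : Type*} [CommRing R] (q : R) (m : ℕ) : R := ∑ i ∈ Finset.range m, q ^ i

/-- [m]_q! = [1]_q [2]_q ⋯ [m]_q, with [0]_q! = 1. -/
def qfact {R : Type*} [CommRing R] (q : R) (m : ℕ) : R := ∏ i ∈ Finset.range m, qnum q (i + 1)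

/-- q-Stirling numbers: S_{0,0}(q)=1, S_{n,k}(q)=0 for k<0 or k>n, and
S_{n+1,k}(q) = S_{n,k−1}(q) + [k]_q S_{n,k}(q). -/
def qStirling {R : Type*} [CommRing R] (q : R) : ℕ → ℕ → R
  | 0, 0 => 1
  | 0, _ + 1 => 0
  | _ + 1, 0 => 0
  | n + 1, k + 1 => qStirling q n k + qnum q (k + 1) * qStirling q n (k + 1)

/-- The set of star-sets of size k inside a given finite set (e.g. the descent set). -/
def starSets (D : Finset ℕ) (k : ℕ) : Finset (Finset ℕ) :=
  D.powerset.filter fun S => S.card = k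

/-- inv((σ,S)) = inv(σ) − Σ_{i∈S} (1 + inv^{□,i}(σ)) for a descent-starred permutation. -/
def starInv {n : ℕ} (σ : Equiv.Perm (Fin n)) (S : Finset ℕ) : ℕ :=
  invNum σ - ∑ i ∈ S, (1 + invEnd σ i)

/-- maj((σ,S)) = maj(σ) − Σ_{i∈S} |Des(σ) ∩ {i,…,n−1}| for a descent-starred permutation. -/
def starMaj {n : ℕ} (σ : Equiv.Perm (Fin n)) (S : Finset ℕ) : ℕ :=
  majNum σ - ∑ i ∈ S, (DesSet σ ∩ Finset.Icc i (n - 1)).card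

/-- Gaussian binomial coefficients: binom_q(m,0)=1, binom_q(m,r)=0 for r>m, and
binom_q(m,r) = binom_q(m−1,r−1) + q^r · binom_q(m−1,r). -/
def qbinom {R : Type*} [CommRing R] (q : R) : ℕ → ℕ → R
  | _, 0 => 1
  | 0, _ + 1 => 0
  | m + 1, r + 1 => qbinom q m r + q ^ (r + 1) * qbinom q m (r + 1)

/-- A_{n,j}(q) = Σ_{σ ∈ 𝔖_n, des(σ)=j} q^{maj(σ)}. -/
def eulerA {R : Type*} [CommRing R] (q : R) (n j : ℕ) : R :=
  ∑ σ ∈ (Finset.univ : Finset (Equiv.Perm (Fin n))).filter (fun σ => desNum σ = j),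
    q ^ majNum σ

/-- [m]_{p,q} = p^{m−1} + p^{m−2} q + ⋯ + p q^{m−2} + q^{m−1}. -/
def pqnum {R : Type*} [CommRing R] (p q : R) (m : ℕ) : R :=
  ∑ i ∈ Finset.range m, p ^ (m - 1 - i) * q ^ i

/-- [m]_{p,q}! = [1]_{p,q} [2]_{p,q} ⋯ [m]_{p,q}. -/
def pqfact {R : Type*} [CommRing R] (p q : R) (m : ℕ) : R :=
  ∏ i ∈ Finset.range m, pqnum p q (i + 1)

/-- p,q-Stirling numbers: S_{0,0}(p,q)=1, S_{n,k}(p,q)=0 for k<0 or k>n, and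
S_{n+1,k}(p,q) = S_{n,k−1}(p,q) + [k]_{p,q} S_{n,k}(p,q). -/
def pqStirling {R : Type*} [CommRing R] (p q : R) : ℕ → ℕ → R
  | 0, 0 => 1
  | 0, _ + 1 => 0
  | _ + 1, 0 => 0
  | n + 1, k + 1 => pqStirling p q n k + pqnum p q (k + 1) * pqStirling p q n (k + 1)
section Ground
open Equiv Finset

variable {n : ℕ}

lemma oneline_eq {σ : Equiv.Perm (Fin n)} {i : ℕ} (h1 : 1 ≤ i) (h2 : i ≤ n) :
    oneline σ i = (σ ⟨i - 1, by omega⟩ : ℕ) + 1 := by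
  rw [oneline, dif_pos ⟨h1, h2⟩]

lemma oneline_ne {σ : Equiv.Perm (Fin n)} {i j : ℕ} (h1 : 1 ≤ i) (h2 : i ≤ n)
    (h3 : 1 ≤ j) (h4 : j ≤ n) (hij : i ≠ j) : oneline σ i ≠ oneline σ j := by
  rw [oneline_eq h1 h2, oneline_eq h3 h4]
  intro h
  have := σ.injective (Fin.val_injective (by omega : ((σ ⟨i-1, by omega⟩ : Fin n) : ℕ) = (σ ⟨j-1, by omega⟩ : ℕ)))
  have := congrArg Fin.val this
  simp at this
  omega

/-- inv as sum of invEnd over positions. -/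
lemma invNum_eq_sum (σ : Equiv.Perm (Fin n)) :
    invNum σ = ∑ j ∈ Icc 1 n, invEnd σ j := by
  rw [invNum]
  rw [Finset.card_eq_sum_card_fiberwise (f := Prod.snd) (t := Icc 1 n)
    (by intro p hp; simp only [Finset.mem_coe, mem_filter, mem_product] at hp; exact hp.1.2)]
  refine Finset.sum_congr rfl fun j hj => ?_
  rw [invEnd]
  apply Finset.card_bij (fun p _ => p.1)
  · intro p hp
    simp only [mem_filter, mem_product, mem_Icc] at hp ⊢
    obtain ⟨⟨⟨hi, hj2⟩, hlt, hol⟩, hpj⟩ := hp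
    refine ⟨hi, by omega, by rwa [hpj] at hol⟩
  · intro p hp p' hp' h
    simp only [mem_filter, mem_product, mem_Icc] at hp hp'
    exact Prod.ext h (hp.2.trans hp'.2.symm)
  · intro i hi
    simp only [mem_filter, mem_product, mem_Icc] at hi hj
    refine ⟨(i, j), ?_, rfl⟩
    simp only [mem_filter, mem_product, mem_Icc]
    exact ⟨⟨⟨hi.1, hj⟩, hi.2.1, hi.2.2⟩, trivial⟩

end Ground
section Ground2
open Equiv Finset

variable {n : ℕ} {σ : Equiv.Perm (Fin n)} {i : ℕ}

lemma invEnd_lt_of_desc (h1 : 1 ≤ i) (h2 : i + 1 ≤ n) (hd : oneline σ (i+1) < oneline σ i) :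
    invEnd σ i < invEnd σ (i+1) := by
  rw [invEnd, invEnd]
  apply Finset.card_lt_card
  constructor
  · intro b hb
    simp only [mem_filter, mem_Icc] at hb ⊢
    exact ⟨hb.1, by omega, hd.trans hb.2.2⟩
  · intro hsub
    have : i ∈ (Icc 1 n).filter fun b => b < i + 1 ∧ oneline σ (i+1) < oneline σ b := by
      simp only [mem_filter, mem_Icc]
      exact ⟨⟨h1, by omega⟩, by omega, hd⟩
    have := hsub this
    simp only [mem_filter, mem_Icc] at this
    omega

lemma invEnd_le_of_asc (h1 : 1 ≤ i) (h2 : i + 1 ≤ n) (ha : oneline σ i < oneline σ (i+1)) :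
    invEnd σ (i+1) ≤ invEnd σ i := by
  rw [invEnd, invEnd]
  apply Finset.card_le_card
  intro b hb
  simp only [mem_filter, mem_Icc] at hb ⊢
  obtain ⟨hmem, hlt, hol⟩ := hb
  have hbi : b ≠ i := by
    intro h; subst h; exact absurd (ha.trans hol) (lt_irrefl _)
  exact ⟨hmem, by omega, ha.trans hol⟩

lemma asc_iff_invEnd (h1 : 1 ≤ i) (h2 : i + 1 ≤ n) :
    (oneline σ i < oneline σ (i+1)) ↔ invEnd σ (i+1) ≤ invEnd σ i := by
  constructor
  · exact invEnd_le_of_asc h1 h2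
  · intro h
    by_contra hna
    have hne := oneline_ne (σ := σ) h1 (by omega) (by omega : 1 ≤ i+1) h2 (by omega)
    have hd : oneline σ (i+1) < oneline σ i := by omega
    have := invEnd_lt_of_desc h1 h2 hd
    omega

lemma desc_iff_invEnd (h1 : 1 ≤ i) (h2 : i + 1 ≤ n) :
    (oneline σ (i+1) < oneline σ i) ↔ invEnd σ i < invEnd σ (i+1) := by
  constructor
  · exact invEnd_lt_of_desc h1 h2
  · intro h
    by_contra hnd
    have hne := oneline_ne (σ := σ) h1 (by omega) (by omega : 1 ≤ i+1) h2 (by omega)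
    have ha : oneline σ i < oneline σ (i+1) := by omega
    have := invEnd_le_of_asc h1 h2 ha
    omega

/-- invEnd at the last position. -/
lemma invEnd_last {m : ℕ} (σ : Equiv.Perm (Fin (m+1))) :
    invEnd σ (m+1) = m - (σ (Fin.last m) : ℕ) := by
  rw [invEnd]
  have : ((Icc 1 (m+1)).filter fun i => i < m+1 ∧ oneline σ (m+1) < oneline σ i).card
      = (Finset.Ioi (σ (Fin.last m))).card := by
    apply Finset.card_bij (fun i hi => σ ⟨i - 1, by
      simp only [mem_filter, mem_Icc] at hi; omega⟩)
    · intro i hi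
      simp only [mem_filter, mem_Icc] at hi
      obtain ⟨⟨ha, hb⟩, hlt, hol⟩ := hi
      rw [oneline_eq (by omega) (le_refl _), oneline_eq ha hb] at hol
      simp only [Finset.mem_Ioi]
      have : (⟨m+1-1, by omega⟩ : Fin (m+1)) = Fin.last m := by
        apply Fin.ext; simp
      rw [this] at hol
      exact Fin.lt_def.mpr (by omega)
    · intro a ha b hb h
      simp only [mem_filter, mem_Icc] at ha hb
      have := σ.injective h
      have := congrArg Fin.val this
      simp only at this
      omega
    · intro v hv
      simp only [Finset.mem_Ioi] at hv
      have hvne : σ.symm v ≠ Fin.last m := by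
        intro h
        have : v = σ (Fin.last m) := by rw [← h]; simp
        rw [this] at hv; exact absurd hv (lt_irrefl _)
      have hvlt : (σ.symm v : ℕ) < m := by
        have := (σ.symm v).isLt
        have : (σ.symm v : ℕ) ≠ m := fun h => hvne (Fin.ext (by simp [h]))
        omega
      refine ⟨(σ.symm v : ℕ) + 1, ?_, ?_⟩
      · simp only [mem_filter, mem_Icc]
        refine ⟨⟨by omega, by omega⟩, by omega, ?_⟩
        rw [oneline_eq (by omega) (le_refl _), oneline_eq (by omega) (by omega)]
        have h1 : (⟨m+1-1, by omega⟩ : Fin (m+1)) = Fin.last m := Fin.ext (by simp)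
        have h2 : (⟨(σ.symm v : ℕ) + 1 - 1, by omega⟩ : Fin (m+1)) = σ.symm v := Fin.ext (by simp)
        rw [h1, h2]
        simp only [Equiv.apply_symm_apply]
        have := Fin.lt_def.mp hv
        omega
      · have h2 : (⟨(σ.symm v : ℕ) + 1 - 1, by omega⟩ : Fin (m+1)) = σ.symm v := Fin.ext (by simp)
        rw [h2]
        simp
  rw [this, Fin.card_Ioi]
  omega

end Ground2
section Phi
open Equiv Finset

/-- Append: given e ∈ S_m and p ∈ Fin (m+1), the permutation of Fin (m+1)
whose last value is p and whose first m values are the pattern e. -/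
def phi {m : ℕ} (e : Equiv.Perm (Fin m)) (p : Fin (m+1)) : Equiv.Perm (Fin (m+1)) :=
  (finSuccEquiv' (Fin.last m)).trans ((Equiv.optionCongr e).trans (finSuccEquiv' p).symm)

lemma phi_last {m : ℕ} (e : Equiv.Perm (Fin m)) (p : Fin (m+1)) :
    phi e p (Fin.last m) = p := by
  rw [phi]
  simp only [Equiv.trans_apply, finSuccEquiv'_at, Equiv.optionCongr_apply, Option.map_none]
  exact finSuccEquiv'_symm_none p

lemma phi_castSucc {m : ℕ} (e : Equiv.Perm (Fin m)) (p : Fin (m+1)) (x : Fin m) :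
    phi e p (Fin.castSucc x) = p.succAbove (e x) := by
  have h : Fin.castSucc x = (Fin.last m).succAbove x := by rw [Fin.succAbove_last]
  rw [phi, h]
  simp only [Equiv.trans_apply, finSuccEquiv'_succAbove, Equiv.optionCongr_apply,
    Option.map_some]
  exact finSuccEquiv'_symm_some p (e x)

lemma phi_bijective {m : ℕ} :
    Function.Bijective (fun ep : Equiv.Perm (Fin m) × Fin (m+1) => phi ep.1 ep.2) := by
  rw [Fintype.bijective_iff_injective_and_card]
  constructor
  · rintro ⟨e, p⟩ ⟨e', p'⟩ h
    simp only at h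
    have hp : p = p' := by rw [← phi_last e p, ← phi_last e' p', h]
    have he : e = e' := by
      apply Equiv.ext
      intro x
      have this : phi e p (Fin.castSucc x) = phi e' p' (Fin.castSucc x) := by rw [h]
      rw [phi_castSucc, phi_castSucc, hp] at this
      exact Fin.succAbove_right_injective this
    rw [hp, he]
  · simp [Fintype.card_perm, Fintype.card_prod, Nat.factorial_succ, mul_comm]

variable {m : ℕ} (e : Equiv.Perm (Fin m)) (p : Fin (m+1))

lemma oneline_phi {i : ℕ} (h1 : 1 ≤ i) (h2 : i ≤ m) :
    oneline (phi e p) i = (p.succAbove (e ⟨i-1, by omega⟩) : ℕ) + 1 := by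
  rw [oneline_eq h1 (by omega)]
  congr 1
  have : (⟨i-1, by omega⟩ : Fin (m+1)) = Fin.castSucc ⟨i-1, by omega⟩ := by
    apply Fin.ext; simp
  rw [this, phi_castSucc]

lemma oneline_phi_lt {i j : ℕ} (h1 : 1 ≤ i) (h2 : i ≤ m) (h3 : 1 ≤ j) (h4 : j ≤ m) :
    (oneline (phi e p) i < oneline (phi e p) j) ↔ (oneline e i < oneline e j) := by
  rw [oneline_phi e p h1 h2, oneline_phi e p h3 h4, oneline_eq h1 h2, oneline_eq h3 h4]
  have key : ∀ a b : Fin m, ((p.succAbove a : ℕ) < (p.succAbove b : ℕ)) ↔ ((a : ℕ) < (b : ℕ)) := by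
    intro a b
    rw [← Fin.lt_def, ← Fin.lt_def, Fin.succAbove_lt_succAbove_iff]
  simp only [Nat.add_lt_add_iff_right]
  exact key _ _

lemma invEnd_phi {j : ℕ} (h1 : 1 ≤ j) (h2 : j ≤ m) :
    invEnd (phi e p) j = invEnd e j := by
  rw [invEnd, invEnd]
  congr 1
  ext i
  simp only [mem_filter, mem_Icc]
  constructor
  · rintro ⟨⟨ha, hb⟩, hlt, hol⟩
    refine ⟨⟨ha, by omega⟩, hlt, ?_⟩
    exact (oneline_phi_lt e p h1 h2 ha (by omega)).mp hol
  · rintro ⟨⟨ha, hb⟩, hlt, hol⟩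
    refine ⟨⟨ha, by omega⟩, hlt, ?_⟩
    exact (oneline_phi_lt e p h1 h2 ha hb).mpr hol

lemma invEnd_phi_last : invEnd (phi e p) (m+1) = m - (p : ℕ) := by
  rw [invEnd_last, phi_last]

end Phi
section Arith
open Finset

/-- Σ_{d<t} C(d+s, s) = C(t+s, s+1). -/
lemma sum_range_choose_add (t s : ℕ) :
    ∑ d ∈ range t, (d + s).choose s = (t + s).choose (s + 1) := by
  induction t with
  | zero => simp [Nat.choose_eq_zero_of_lt (Nat.lt_succ_self s)]
  | succ t ih =>
    rw [Finset.sum_range_succ, ih]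
    have : t + 1 + s = (t + s) + 1 := by omega
    rw [this, Nat.choose_succ_succ (t + s) s]
    simp only [Nat.succ_eq_add_one]
    omega

variable {K : Type*} [Field K] (q : K)

/-- RHS weight function in the key claim. -/
def hRw : ℕ → ℕ → ℕ → K
  | 0, b, _ => q ^ b
  | r+1, b, m => ∑ k ∈ Ico b m, ((k - b + r).choose r : K) * q ^ k

lemma hRw_zero (b m : ℕ) : hRw q 0 b m = q ^ b := rfl

lemma hRw_succ (r b m : ℕ) :
    hRw q (r+1) b m = ∑ k ∈ Ico b m, ((k - b + r).choose r : K) * q ^ k := rfl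

lemma Ioc_eq_Ico (b m : ℕ) : Finset.Ioc b m = Finset.Ico (b+1) (m+1) := by
  ext x
  simp only [mem_Ioc, mem_Ico]
  omega

/-- (S1) -/
lemma sum_hRw (r m : ℕ) :
    ∑ a ∈ range (m+1), hRw q r a (m+1) = ∑ a ∈ range (m+1), ((a + r).choose r : K) * q ^ a := by
  cases r with
  | zero => simp [hRw_zero]
  | succ r =>
    simp only [hRw_succ]
    rw [range_eq_Ico]
    rw [Finset.sum_Ico_Ico_comm 0 (m+1) (fun a k => ((k - a + r).choose r : K) * q ^ k)]
    refine Finset.sum_congr rfl fun k hk => ?_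
    have inner : ∑ a ∈ Finset.Ico 0 (k+1), ((k - a + r).choose r : K)
        = ((k + (r+1)).choose (r+1) : ℕ) := by
      rw [Nat.Ico_zero_eq_range, ← Nat.cast_sum]
      congr 1
      have : ∀ a ∈ range (k+1), (k - a + r).choose r = (fun d => (d + r).choose r) (k + 1 - 1 - a) := by
        intro a ha
        simp only [mem_range] at ha
        have h : k - a = k + 1 - 1 - a := by omega
        rw [h]
      rw [Finset.sum_congr rfl this, Finset.sum_range_reflect (fun d => (d + r).choose r) (k+1),
        sum_range_choose_add (k+1) r]
      congr 1
      omega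
    rw [← Finset.sum_mul, inner]

/-- (S2) -/
lemma sum_hRw_Ioc (z zq : K) (hzq : zq * q = z) (r b m : ℕ) :
    zq * ∑ a ∈ Finset.Ioc b m, hRw q r a (m+1) = z * hRw q (r+1) b m := by
  cases r with
  | zero =>
    simp only [hRw_zero, hRw_succ]
    rw [Ioc_eq_Ico]
    rw [Finset.sum_Ico_eq_sum_range (f := fun a => q ^ a), Finset.sum_Ico_eq_sum_range]
    have h1 : m + 1 - (b + 1) = m - b := by omega
    rw [h1, Finset.mul_sum, Finset.mul_sum]
    refine Finset.sum_congr rfl fun i hi => ?_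
    have h2 : (b + i - b + 0).choose 0 = 1 := by simp
    rw [h2]
    push_cast
    have e2 : q ^ (b + 1 + i) = q ^ (b + i) * q := by
      rw [← pow_succ]; congr 1; omega
    rw [e2, ← hzq]
    ring
  | succ r =>
    simp only [hRw_succ]
    rw [Ioc_eq_Ico]
    rw [Finset.sum_Ico_Ico_comm (b+1) (m+1) (fun a k => ((k - a + r).choose r : K) * q ^ k)]
    have inner : ∀ k ∈ Finset.Ico (b+1) (m+1),
        ∑ a ∈ Finset.Ico (b+1) (k+1), ((k - a + r).choose r : K) * q ^ k
        = (((k - b - 1) + (r+1)).choose (r+1) : ℕ) * q ^ k := by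
      intro k hk
      simp only [mem_Ico] at hk
      rw [← Finset.sum_mul]
      congr 1
      rw [← Nat.cast_sum]
      congr 1
      rw [Finset.sum_Ico_eq_sum_range]
      have hkb : k + 1 - (b + 1) = k - b := by omega
      rw [hkb]
      have : ∀ i ∈ range (k - b), (k - (b + 1 + i) + r).choose r
          = (fun d => (d + r).choose r) (k - b - 1 - i) := by
        intro i hi
        simp only [mem_range] at hi
        have h : k - (b + 1 + i) = k - b - 1 - i := by omega
        rw [h]
      rw [Finset.sum_congr rfl this, Finset.sum_range_reflect (fun d => (d + r).choose r) (k - b),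
        sum_range_choose_add (k - b) r]
      congr 1
      omega
    rw [Finset.sum_congr rfl inner]
    rw [Finset.sum_Ico_eq_sum_range, Finset.sum_Ico_eq_sum_range]
    have h1 : m + 1 - (b + 1) = m - b := by omega
    have h2 : m - b = m - b := rfl
    rw [h1, Finset.mul_sum, Finset.mul_sum]
    refine Finset.sum_congr rfl fun i hi => ?_
    simp only [mem_range] at hi
    have e1 : b + 1 + i - b - 1 + (r + 1) = b + i - b + (r + 1) := by omega
    rw [e1]
    have e2 : q ^ (b + 1 + i) = q ^ (b + i) * q := by
      rw [← pow_succ]; congr 1; omega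
    rw [e2, ← hzq]
    ring
end Arith
section Weights
open Equiv Finset

variable {K : Type*} [Field K] (q z zq : K)

/-- LHS local-factor weight. -/
def WL {n : ℕ} (σ : Equiv.Perm (Fin n)) : K :=
  ∏ j ∈ Icc 1 n, (if 2 ≤ j ∧ invEnd σ j ≤ invEnd σ (j-1) then q ^ invEnd σ j + z
    else q ^ invEnd σ j)

/-- RHS local-factor weight (without the last q-power). -/
def WR {n : ℕ} (σ : Equiv.Perm (Fin n)) : K :=
  ∏ j ∈ Icc 1 (n-1), (if invEnd σ j < invEnd σ (j+1) then q ^ invEnd σ j + zq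
    else q ^ invEnd σ j)

variable {n : ℕ} (σ : Equiv.Perm (Fin n))

lemma invEnd_one : invEnd σ 1 = 0 := by
  rw [invEnd, Finset.card_eq_zero, Finset.filter_eq_empty_iff]
  intro i hi
  simp only [mem_Icc] at hi
  omega

lemma invEnd_le : invEnd σ n ≤ n := by
  calc invEnd σ n ≤ (Icc 1 n).card := Finset.card_filter_le _ _
  _ = n := by rw [Nat.card_Icc]; omega

lemma WL_one (σ : Equiv.Perm (Fin 1)) : WL q z σ = 1 := by
  rw [WL]
  rw [show Icc 1 1 = {1} from rfl, Finset.prod_singleton, if_neg (by omega), invEnd_one, pow_zero]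

lemma WR_one (σ : Equiv.Perm (Fin 1)) : WR q zq σ = 1 := by
  rw [WR]
  norm_num

lemma hRw_zero_one (r : ℕ) : hRw q r 0 1 = 1 := by
  cases r with
  | zero => simp [hRw_zero]
  | succ r =>
    rw [hRw_succ]
    rw [show Finset.Ico 0 1 = {0} from rfl, Finset.sum_singleton]
    simp

variable {m : ℕ} (e : Equiv.Perm (Fin m)) (p : Fin (m+1))

lemma WL_phi (hm : 1 ≤ m) :
    WL q z (phi e p) = WL q z e *
      (if m - (p : ℕ) ≤ invEnd e m then q ^ (m - (p : ℕ)) + z else q ^ (m - (p : ℕ))) := by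
  rw [WL, WL]
  have hsplit : Icc 1 (m+1) = insert (m+1) (Icc 1 m) := by
    ext x; simp only [mem_insert, mem_Icc]; omega
  rw [hsplit, Finset.prod_insert (by simp)]
  rw [mul_comm]
  congr 1
  · refine Finset.prod_congr rfl fun j hj => ?_
    simp only [mem_Icc] at hj
    by_cases h2 : 2 ≤ j
    · rw [invEnd_phi e p hj.1 hj.2, invEnd_phi e p (by omega : 1 ≤ j - 1) (by omega)]
    · simp only [h2, false_and, if_false]
      rw [invEnd_phi e p hj.1 hj.2]
  · rw [invEnd_phi_last, show m + 1 - 1 = m from rfl, invEnd_phi e p hm (le_refl m)]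
    have h2 : 2 ≤ m + 1 := by omega
    by_cases hc : m - (p : ℕ) ≤ invEnd e m
    · rw [if_pos ⟨h2, hc⟩, if_pos hc]
    · rw [if_neg (by tauto), if_neg hc]

lemma WR_phi (hm : 1 ≤ m) :
    WR q zq (phi e p) = WR q zq e *
      (if invEnd e m < m - (p : ℕ) then q ^ invEnd e m + zq else q ^ invEnd e m) := by
  rw [WR, WR]
  have h1 : m + 1 - 1 = m := rfl
  rw [h1]
  have hsplit : Icc 1 m = insert m (Icc 1 (m-1)) := by
    ext x; simp only [mem_insert, mem_Icc]; omega
  rw [hsplit, Finset.prod_insert (by simp only [mem_Icc]; omega)]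
  rw [mul_comm]
  congr 1
  · refine Finset.prod_congr rfl fun j hj => ?_
    simp only [mem_Icc] at hj
    rw [invEnd_phi e p hj.1 (by omega), invEnd_phi e p (by omega : 1 ≤ j + 1) (by omega)]
  · rw [invEnd_phi e p hm (le_refl m), invEnd_phi_last]

lemma invEnd_phi_top : invEnd (phi e p) (m+1) = m - (p : ℕ) := invEnd_phi_last e p

lemma sum_fin_reflect (G : ℕ → K) :
    ∑ p : Fin (m+1), G (m - (p : ℕ)) = ∑ a ∈ range (m+1), G a := by
  rw [Fin.sum_univ_eq_sum_range (fun i => G (m - i)) (m+1)]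
  have := Finset.sum_range_reflect G (m+1)
  simpa using this

end Weights
section Claim
open Equiv Finset

variable {K : Type*} [Field K]

theorem claim_main (q z zq : K) (hzq : zq * q = z) :
    ∀ m, 1 ≤ m → ∀ r : ℕ,
    (∑ σ : Equiv.Perm (Fin m), ((invEnd σ m + r).choose r : K) * WL q z σ)
    = ∑ σ : Equiv.Perm (Fin m), hRw q r (invEnd σ m) m * WR q zq σ := by
  intro m
  induction m with
  | zero => omega
  | succ m ih =>
    intro _ r
    by_cases hm : 1 ≤ m
    swap
    · -- base case m = 0 : permutations of Fin 1
      have hm0 : m = 0 := by omega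
      subst hm0
      have hL : ∀ σ : Equiv.Perm (Fin 1),
          ((invEnd σ 1 + r).choose r : K) * WL q z σ = 1 := by
        intro σ
        rw [invEnd_one, WL_one, zero_add, Nat.choose_self, Nat.cast_one, one_mul]
      have hR : ∀ σ : Equiv.Perm (Fin 1),
          hRw q r (invEnd σ 1) 1 * WR q zq σ = 1 := by
        intro σ
        rw [invEnd_one, WR_one, hRw_zero_one, one_mul]
      rw [Finset.sum_congr rfl (fun σ _ => hL σ), Finset.sum_congr rfl (fun σ _ => hR σ)]
    · -- inductive step
      -- reindex by phi
      have hL0 := Fintype.sum_bijective _ phi_bijective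
        (fun ep : Equiv.Perm (Fin m) × Fin (m+1) =>
          ((invEnd (phi ep.1 ep.2) (m+1) + r).choose r : K) * WL q z (phi ep.1 ep.2))
        (fun σ : Equiv.Perm (Fin (m+1)) =>
          ((invEnd σ (m+1) + r).choose r : K) * WL q z σ)
        (fun ep => rfl)
      have hR0 := Fintype.sum_bijective _ phi_bijective
        (fun ep : Equiv.Perm (Fin m) × Fin (m+1) =>
          hRw q r (invEnd (phi ep.1 ep.2) (m+1)) (m+1) * WR q zq (phi ep.1 ep.2))
        (fun σ : Equiv.Perm (Fin (m+1)) =>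
          hRw q r (invEnd σ (m+1)) (m+1) * WR q zq σ)
        (fun ep => rfl)
      rw [← hL0, ← hR0, Fintype.sum_prod_type, Fintype.sum_prod_type]
      -- the common factor Σ_a C(a+r,r) q^a
      set Sq : K := ∑ a ∈ range (m+1), ((a + r).choose r : K) * q ^ a with hSq
      have keyL : ∀ e : Equiv.Perm (Fin m),
          (∑ p : Fin (m+1), ((invEnd (phi e p) (m+1) + r).choose r : K) * WL q z (phi e p))
          = Sq * WL q z e
            + z * (((invEnd e m + (r+1)).choose (r+1) : K) * WL q z e) := by
        intro e
        have hb : invEnd e m ≤ m := invEnd_le e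
        calc ∑ p : Fin (m+1), ((invEnd (phi e p) (m+1) + r).choose r : K) * WL q z (phi e p)
            = ∑ p : Fin (m+1), (((m - (p:ℕ)) + r).choose r : K) *
                (WL q z e * (if m - (p:ℕ) ≤ invEnd e m then q ^ (m - (p:ℕ)) + z
                  else q ^ (m - (p:ℕ)))) := by
              refine Finset.sum_congr rfl fun p _ => ?_
              rw [invEnd_phi_top, WL_phi q z e p hm]
          _ = ∑ a ∈ range (m+1), ((a + r).choose r : K) *
                (WL q z e * (if a ≤ invEnd e m then q ^ a + z else q ^ a)) := by
              exact sum_fin_reflect (fun a => ((a + r).choose r : K) *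
                (WL q z e * (if a ≤ invEnd e m then q ^ a + z else q ^ a)))
          _ = ∑ a ∈ range (m+1), (((a + r).choose r : K) * q ^ a * WL q z e
                + ((a + r).choose r : K) * (if a ≤ invEnd e m then z else 0) * WL q z e) := by
              refine Finset.sum_congr rfl fun a _ => ?_
              by_cases hc : a ≤ invEnd e m
              · rw [if_pos hc, if_pos hc]; ring
              · rw [if_neg hc, if_neg hc]; ring
          _ = Sq * WL q z e
              + (∑ a ∈ range (m+1), ((a + r).choose r : K) * (if a ≤ invEnd e m then z else 0))
                * WL q z e := by
              rw [Finset.sum_add_distrib, ← Finset.sum_mul, ← Finset.sum_mul, hSq]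
          _ = Sq * WL q z e
              + z * (((invEnd e m + (r+1)).choose (r+1) : K) * WL q z e) := by
              congr 1
              have : ∑ a ∈ range (m+1), ((a + r).choose r : K) * (if a ≤ invEnd e m then z else 0)
                  = ∑ a ∈ range (invEnd e m + 1), ((a + r).choose r : K) * z := by
                rw [← Finset.sum_filter_add_sum_filter_not (range (m+1)) (fun a => a ≤ invEnd e m)]
                have h1 : (range (m+1)).filter (fun a => a ≤ invEnd e m) = range (invEnd e m + 1) := by
                  ext x; simp only [mem_filter, mem_range]; omega
                have h2 : ∑ a ∈ (range (m+1)).filter (fun a => ¬ a ≤ invEnd e m),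
                    ((a + r).choose r : K) * (if a ≤ invEnd e m then z else 0) = 0 := by
                  apply Finset.sum_eq_zero
                  intro a ha
                  simp only [mem_filter] at ha
                  rw [if_neg ha.2, mul_zero]
                rw [h2, add_zero]
                refine Finset.sum_congr h1 fun a ha => ?_
                simp only [h1, mem_range] at ha
                rw [if_pos (by omega)]
              rw [this, ← Finset.sum_mul, ← Nat.cast_sum, sum_range_choose_add]
              have : invEnd e m + 1 + r = invEnd e m + (r + 1) := by omega
              rw [this]
              ring
      have keyR : ∀ e : Equiv.Perm (Fin m),
          (∑ p : Fin (m+1), hRw q r (invEnd (phi e p) (m+1)) (m+1) * WR q zq (phi e p))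
          = Sq * (q ^ invEnd e m * WR q zq e)
            + z * (hRw q (r+1) (invEnd e m) m * WR q zq e) := by
        intro e
        have hb : invEnd e m ≤ m := invEnd_le e
        calc ∑ p : Fin (m+1), hRw q r (invEnd (phi e p) (m+1)) (m+1) * WR q zq (phi e p)
            = ∑ p : Fin (m+1), hRw q r (m - (p:ℕ)) (m+1) *
                (WR q zq e * (if invEnd e m < m - (p:ℕ) then q ^ invEnd e m + zq
                  else q ^ invEnd e m)) := by
              refine Finset.sum_congr rfl fun p _ => ?_
              rw [invEnd_phi_top, WR_phi q zq e p hm]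
          _ = ∑ a ∈ range (m+1), hRw q r a (m+1) *
                (WR q zq e * (if invEnd e m < a then q ^ invEnd e m + zq
                  else q ^ invEnd e m)) := by
              exact sum_fin_reflect (fun a => hRw q r a (m+1) *
                (WR q zq e * (if invEnd e m < a then q ^ invEnd e m + zq else q ^ invEnd e m)))
          _ = ∑ a ∈ range (m+1), (hRw q r a (m+1) * q ^ invEnd e m * WR q zq e
                + hRw q r a (m+1) * (if invEnd e m < a then zq else 0) * WR q zq e) := by
              refine Finset.sum_congr rfl fun a _ => ?_
              by_cases hc : invEnd e m < a
              · rw [if_pos hc, if_pos hc]; ring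
              · rw [if_neg hc, if_neg hc]; ring
          _ = (∑ a ∈ range (m+1), hRw q r a (m+1)) * q ^ invEnd e m * WR q zq e
              + (zq * ∑ a ∈ Finset.Ioc (invEnd e m) m, hRw q r a (m+1)) * WR q zq e := by
              rw [Finset.sum_add_distrib, ← Finset.sum_mul, ← Finset.sum_mul, ← Finset.sum_mul]
              congr 2
              rw [← Finset.sum_filter_add_sum_filter_not (range (m+1))
                (fun a => invEnd e m < a)]
              have h1 : (range (m+1)).filter (fun a => invEnd e m < a)
                  = Finset.Ioc (invEnd e m) m := by
                ext x; simp only [mem_filter, mem_range, mem_Ioc]; omega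
              have h2 : ∑ a ∈ (range (m+1)).filter (fun a => ¬ invEnd e m < a),
                  hRw q r a (m+1) * (if invEnd e m < a then zq else 0) = 0 := by
                apply Finset.sum_eq_zero
                intro a ha
                simp only [mem_filter] at ha
                rw [if_neg ha.2, mul_zero]
              rw [h2, add_zero, Finset.mul_sum]
              refine Finset.sum_congr h1 fun a ha => ?_
              simp only [h1, mem_Ioc] at ha
              rw [if_pos ha.1]
              ring
          _ = Sq * (q ^ invEnd e m * WR q zq e)
              + z * (hRw q (r+1) (invEnd e m) m * WR q zq e) := by
              rw [sum_hRw, sum_hRw_Ioc q z zq hzq]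
              rw [hSq]
              ring
      rw [Finset.sum_congr rfl (fun e _ => keyL e), Finset.sum_congr rfl (fun e _ => keyR e)]
      rw [Finset.sum_add_distrib, Finset.sum_add_distrib, ← Finset.mul_sum, ← Finset.mul_sum,
        ← Finset.mul_sum, ← Finset.mul_sum]
      have IH0 : (∑ e : Equiv.Perm (Fin m), WL q z e)
          = ∑ e : Equiv.Perm (Fin m), q ^ invEnd e m * WR q zq e := by
        have := ih hm 0
        simp only [Nat.choose_zero_right, Nat.cast_one, one_mul, hRw_zero] at this
        exact this
      have IH1 := ih hm (r+1)
      rw [IH0, IH1]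
end Claim
section Conv
open Equiv Finset

variable {K : Type*} [Field K] (q z : K)

lemma convA {n : ℕ} (hq : q ≠ 0) (σ : Equiv.Perm (Fin n)) :
    q ^ invNum σ * ∏ i ∈ AscSet σ, (1 + z * (q ^ invEnd σ (i + 1))⁻¹) = WL q z σ := by
  rw [AscSet, Finset.prod_filter, invNum_eq_sum, ← Finset.prod_pow_eq_pow_sum, WL]
  have step : ∀ j ∈ Icc 1 n,
      (if 2 ≤ j ∧ invEnd σ j ≤ invEnd σ (j-1) then q ^ invEnd σ j + z else q ^ invEnd σ j)
      = q ^ invEnd σ j * (if 2 ≤ j ∧ invEnd σ j ≤ invEnd σ (j-1)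
          then 1 + z * (q ^ invEnd σ j)⁻¹ else 1) := by
    intro j _
    by_cases hc : 2 ≤ j ∧ invEnd σ j ≤ invEnd σ (j-1)
    · rw [if_pos hc, if_pos hc, mul_add, mul_one]
      congr 1
      rw [mul_comm z, ← mul_assoc, mul_inv_cancel₀ (pow_ne_zero _ hq), one_mul]
    · rw [if_neg hc, if_neg hc, mul_one]
  rw [Finset.prod_congr rfl step, Finset.prod_mul_distrib]
  congr 1
  have sub : Icc 2 n ⊆ Icc 1 n := by
    intro x hx; simp only [mem_Icc] at hx ⊢; omega
  rw [← Finset.prod_subset sub (by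
    intro x hx hx2
    simp only [mem_Icc] at hx hx2
    rw [if_neg (by omega)])]
  refine Finset.prod_nbij' (fun i => i + 1) (fun j => j - 1) ?_ ?_ ?_ ?_ ?_
  · intro i hi; simp only [mem_Icc] at hi ⊢; omega
  · intro j hj; simp only [mem_Icc] at hj ⊢; omega
  · intro i hi; simp only [mem_Icc] at hi; omega
  · intro j hj; simp only [mem_Icc] at hj; omega
  · intro i hi
    simp only [mem_Icc] at hi
    have h1 : 1 ≤ i := hi.1
    have h2 : i + 1 ≤ n := by omega
    have hcond := asc_iff_invEnd (σ := σ) h1 h2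
    have hs : i + 1 - 1 = i := by omega
    rw [hs]
    by_cases hc : oneline σ i < oneline σ (i + 1)
    · rw [if_pos hc, if_pos ⟨by omega, hcond.mp hc⟩]
    · rw [if_neg hc, if_neg (fun hcc => hc (hcond.mpr hcc.2))]

lemma convB {n : ℕ} (hn : 1 ≤ n) (hq : q ≠ 0) (σ : Equiv.Perm (Fin n)) :
    q ^ invNum σ * ∏ i ∈ DesSet σ, (1 + z * (q ^ (1 + invEnd σ i))⁻¹)
    = q ^ invEnd σ n * WR q (z * q⁻¹) σ := by
  rw [DesSet, Finset.prod_filter, invNum_eq_sum, ← Finset.prod_pow_eq_pow_sum, WR]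
  have hsplit : Icc 1 n = insert n (Icc 1 (n-1)) := by
    ext x; simp only [mem_insert, mem_Icc]; omega
  rw [hsplit, Finset.prod_insert (by simp only [mem_Icc]; omega)]
  rw [mul_assoc]
  congr 1
  rw [← Finset.prod_mul_distrib]
  refine Finset.prod_congr rfl fun i hi => ?_
  simp only [mem_Icc] at hi
  have h1 : 1 ≤ i := hi.1
  have h2 : i + 1 ≤ n := by omega
  have hcond := desc_iff_invEnd (σ := σ) h1 h2
  by_cases hc : oneline σ (i+1) < oneline σ i
  · rw [if_pos hc, if_pos (hcond.mp hc)]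
    have hpc : (q : K) ^ invEnd σ i ≠ 0 := pow_ne_zero _ hq
    field_simp
    ring
  · rw [if_neg hc, if_neg (fun hcc => hc (hcond.mpr hcc)), mul_one]

end Conv

/-- For a field K, q ≠ 0, z ∈ K and n ≥ 1,
Σ_{σ∈𝔖_n} q^{inv(σ)} Π_{i∈Asc(σ)} (1 + z q^{−inv^{□,i+1}(σ)})
  = Σ_{σ∈𝔖_n} q^{inv(σ)} Π_{i∈Des(σ)} (1 + z q^{−(1+inv^{□,i}(σ))}). -/
theorem statement5 {K : Type*} [Field K] (q z : K) (hq : q ≠ 0) (n : ℕ) (hn : 1 ≤ n) :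
    ∑ σ : Equiv.Perm (Fin n),
        q ^ invNum σ * ∏ i ∈ AscSet σ, (1 + z * (q ^ invEnd σ (i + 1))⁻¹) =
      ∑ σ : Equiv.Perm (Fin n),
        q ^ invNum σ * ∏ i ∈ DesSet σ, (1 + z * (q ^ (1 + invEnd σ i))⁻¹) := by
  have hzq : (z * q⁻¹) * q = z := by
    field_simp
  have key := claim_main q z (z * q⁻¹) hzq n hn 0
  calc ∑ σ : Equiv.Perm (Fin n),
      q ^ invNum σ * ∏ i ∈ AscSet σ, (1 + z * (q ^ invEnd σ (i + 1))⁻¹)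
      = ∑ σ : Equiv.Perm (Fin n), WL q z σ := by
        exact Finset.sum_congr rfl fun σ _ => convA q z hq σ
    _ = ∑ σ : Equiv.Perm (Fin n), ((invEnd σ n + 0).choose 0 : K) * WL q z σ := by
        simp
    _ = ∑ σ : Equiv.Perm (Fin n), hRw q 0 (invEnd σ n) n * WR q (z * q⁻¹) σ := key
    _ = ∑ σ : Equiv.Perm (Fin n), q ^ invEnd σ n * WR q (z * q⁻¹) σ := by
        simp [hRw_zero]
    _ = ∑ σ : Equiv.Perm (Fin n),
        q ^ invNum σ * ∏ i ∈ DesSet σ, (1 + z * (q ^ (1 + invEnd σ i))⁻¹) := by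
        exact Finset.sum_congr rfl fun σ _ => (convB q z hn hq σ).symm
end

section
/- Let q be an element of a commutative ring and write D^{inv}_{n,k}(q) = Σ_{(σ,S)∈𝔖^>_{n,k}} q^{inv((σ,S))}, with the convention D^{inv}_{n,−1}(q) = 0. Then D^{inv}_{n,n−1}(q) = 1 for all n ≥ 1, and for all n ≥ 2 and 0 ≤ k ≤ n−2, D^{inv}_{n,k}(q) = [n−k]_q · D^{inv}_{n−1,k}(q) + [n−k]_q · D^{inv}_{n−1,k−1}(q). -/
open Finset

/-- D^{inv}_{n,k}(q) = Σ_{(σ,S)∈𝔖^>_{n,k}} q^{inv((σ,S))}. -/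
def Dinv {R : Type*} [CommRing R] (q : R) (n k : ℕ) : R :=
  ∑ σ : Equiv.Perm (Fin n), ∑ S ∈ starSets (DesSet σ) k, q ^ starInv σ S

section Aux
variable {n : ℕ}

lemma oneline_le (σ : Equiv.Perm (Fin n)) (i : ℕ) : oneline σ i ≤ n := by
  unfold oneline
  split
  · next h => have := (σ ⟨i-1, by omega⟩).isLt; omega
  · omega

lemma oneline_pos (σ : Equiv.Perm (Fin n)) {i : ℕ} (h1 : 1 ≤ i) (h2 : i ≤ n) :
    1 ≤ oneline σ i := by
  unfold oneline
  rw [dif_pos ⟨h1, h2⟩]; omega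

/-- insertion of the max value at position `p` (0-based). -/
def ins (p : Fin (n+1)) (π : Equiv.Perm (Fin n)) : Equiv.Perm (Fin (n+1)) :=
  (finSuccEquiv' p).trans ((Equiv.optionCongr π).trans (finSuccEquiv' (Fin.last n)).symm)

lemma ins_at (p : Fin (n+1)) (π : Equiv.Perm (Fin n)) : ins p π p = Fin.last n := by
  simp [ins, finSuccEquiv'_at]

lemma ins_below (p : Fin (n+1)) (π : Equiv.Perm (Fin n)) (m : Fin n) (h : m.castSucc < p) :
    ins p π m.castSucc = (π m).castSucc := by
  simp [ins, finSuccEquiv'_below h, Fin.succAbove_last]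

lemma ins_above (p : Fin (n+1)) (π : Equiv.Perm (Fin n)) (m : Fin n) (h : p ≤ m.castSucc) :
    ins p π m.succ = (π m).castSucc := by
  simp [ins, finSuccEquiv'_above h, Fin.succAbove_last]

lemma oneline_ins (p : Fin (n+1)) (π : Equiv.Perm (Fin n)) (i : ℕ)
    (h1 : 1 ≤ i) (h2 : i ≤ n + 1) :
    oneline (ins p π) i =
      if i = (p : ℕ) + 1 then n + 1
      else if i < (p : ℕ) + 1 then oneline π i else oneline π (i - 1) := by
  have hp := p.isLt
  rcases Nat.lt_trichotomy i ((p:ℕ)+1) with hlt | heq | hgt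
  · rw [if_neg (by omega), if_pos hlt]
    have hin : i ≤ n := by omega
    have hm : i - 1 < n := by omega
    have key : (⟨i - 1, by omega⟩ : Fin (n+1)) = (⟨i-1, hm⟩ : Fin n).castSucc := rfl
    unfold oneline
    rw [dif_pos ⟨h1, h2⟩, dif_pos ⟨h1, hin⟩, key, ins_below p π _ (by simp [Fin.lt_def]; omega)]
    simp
  · rw [if_pos heq]
    unfold oneline
    rw [dif_pos ⟨h1, h2⟩]
    have key : (⟨i - 1, by omega⟩ : Fin (n+1)) = p := by apply Fin.ext; simp; omega
    rw [key, ins_at]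
    simp
  · rw [if_neg (by omega), if_neg (by omega)]
    have hm : i - 2 < n := by omega
    have key : (⟨i - 1, by omega⟩ : Fin (n+1)) = (⟨i-2, hm⟩ : Fin n).succ := by
      apply Fin.ext; simp; omega
    unfold oneline
    rw [dif_pos ⟨h1, h2⟩, dif_pos (by omega : 1 ≤ i - 1 ∧ i - 1 ≤ n), key,
      ins_above p π _ (by simp [Fin.le_def]; omega)]
    simp only [Fin.coe_castSucc]
    congr 2

end Aux
section Aux1b
variable {n : ℕ}

lemma oneline_ins_lt (p : Fin (n+1)) (π : Equiv.Perm (Fin n)) {i : ℕ}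
    (h1 : 1 ≤ i) (h2 : i < (p:ℕ) + 1) : oneline (ins p π) i = oneline π i := by
  have hp := p.isLt
  rw [oneline_ins p π i h1 (by omega), if_neg (by omega), if_pos h2]

lemma oneline_ins_at' (p : Fin (n+1)) (π : Equiv.Perm (Fin n)) :
    oneline (ins p π) ((p:ℕ) + 1) = n + 1 := by
  have hp := p.isLt
  rw [oneline_ins p π _ (by omega) (by omega), if_pos rfl]

lemma oneline_ins_gt (p : Fin (n+1)) (π : Equiv.Perm (Fin n)) {i : ℕ}
    (h1 : (p:ℕ) + 1 < i) (h2 : i ≤ n + 1) : oneline (ins p π) i = oneline π (i - 1) := by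
  rw [oneline_ins p π i (by omega) h2, if_neg (by omega), if_neg (by omega)]

end Aux1b
section Aux2
variable {n : ℕ}

lemma mem_des_iff {m : ℕ} (σ : Equiv.Perm (Fin m)) (i : ℕ) :
    i ∈ DesSet σ ↔ 1 ≤ i ∧ i ≤ m - 1 ∧ oneline σ (i + 1) < oneline σ i := by
  simp only [DesSet, Finset.mem_filter, Finset.mem_Icc]; tauto

lemma mem_des_ins (p : Fin (n+1)) (π : Equiv.Perm (Fin n)) (i : ℕ) :
    i ∈ DesSet (ins p π) ↔
      ((i + 1 < (p:ℕ) + 1 ∧ i ∈ DesSet π) ∨ (i = (p:ℕ) + 1 ∧ i ≤ n) ∨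
        ((p:ℕ) + 1 < i ∧ i ≤ n ∧ i - 1 ∈ DesSet π)) := by
  have hp := p.isLt
  rw [mem_des_iff, mem_des_iff, mem_des_iff]
  simp only [Nat.add_sub_cancel]
  constructor
  · rintro ⟨hi1, hi2, hd⟩
    rcases Nat.lt_trichotomy i ((p:ℕ)+1) with hlt | heq | hgt
    · rcases Nat.lt_trichotomy (i+1) ((p:ℕ)+1) with hl | he | h'
      · rw [oneline_ins_lt p π hi1 hlt, oneline_ins_lt p π (by omega) hl] at hd
        exact Or.inl ⟨hl, hi1, by omega, hd⟩
      · rw [oneline_ins_lt p π hi1 hlt, he, oneline_ins_at' p π] at hd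
        have := oneline_le π i; omega
      · omega
    · exact Or.inr (Or.inl ⟨heq, hi2⟩)
    · rw [oneline_ins_gt p π hgt (by omega), oneline_ins_gt p π (by omega) (by omega)] at hd
      have e1 : i + 1 - 1 = (i - 1) + 1 := by omega
      rw [e1] at hd
      exact Or.inr (Or.inr ⟨hgt, hi2, by omega, by omega, hd⟩)
  · intro h
    rcases h with ⟨hlt, h1, h2, h3⟩ | ⟨heq, hle⟩ | ⟨hgt, hle, h1, h2, h3⟩
    · refine ⟨h1, by omega, ?_⟩
      rw [oneline_ins_lt p π h1 (by omega), oneline_ins_lt p π (by omega) hlt]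
      exact h3
    · refine ⟨by omega, by omega, ?_⟩
      rw [heq, oneline_ins_at' p π, oneline_ins_gt p π (by omega) (by omega)]
      have := oneline_le π ((p:ℕ) + 1 + 1 - 1); omega
    · refine ⟨by omega, by omega, ?_⟩
      rw [oneline_ins_gt p π hgt (by omega), oneline_ins_gt p π (by omega) (by omega)]
      have e1 : i + 1 - 1 = (i - 1) + 1 := by omega
      rw [e1]; exact h3

lemma invEnd_ins_lt (p : Fin (n+1)) (π : Equiv.Perm (Fin n)) (j : ℕ)
    (h1 : 1 ≤ j) (h2 : j < (p:ℕ) + 1) :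
    invEnd (ins p π) j = invEnd π j := by
  have hp := p.isLt
  unfold invEnd
  congr 1
  ext i
  simp only [Finset.mem_filter, Finset.mem_Icc]
  constructor
  · rintro ⟨⟨ha, hb⟩, hij, ho⟩
    rw [oneline_ins_lt p π h1 h2, oneline_ins_lt p π ha (by omega)] at ho
    exact ⟨⟨ha, by omega⟩, hij, ho⟩
  · rintro ⟨⟨ha, hb⟩, hij, ho⟩
    refine ⟨⟨ha, by omega⟩, hij, ?_⟩
    rw [oneline_ins_lt p π h1 h2, oneline_ins_lt p π ha (by omega)]
    exact ho

lemma invEnd_ins_self (p : Fin (n+1)) (π : Equiv.Perm (Fin n)) :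
    invEnd (ins p π) ((p:ℕ) + 1) = 0 := by
  unfold invEnd
  rw [Finset.card_eq_zero, Finset.filter_eq_empty_iff]
  rintro i hi
  simp only [Finset.mem_Icc] at hi
  rintro ⟨hij, ho⟩
  rw [oneline_ins_at' p π] at ho
  have := oneline_le (ins p π) i
  omega

lemma invEnd_ins_gt (p : Fin (n+1)) (π : Equiv.Perm (Fin n)) (j : ℕ)
    (h1 : (p:ℕ) + 1 < j) (h2 : j ≤ n + 1) :
    invEnd (ins p π) j = invEnd π (j - 1) + 1 := by
  have hp := p.isLt
  unfold invEnd
  have holj : oneline (ins p π) j = oneline π (j-1) := oneline_ins_gt p π h1 h2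
  have hset : ((Finset.Icc 1 (n+1)).filter fun i => i < j ∧ oneline (ins p π) j < oneline (ins p π) i)
      = insert ((p:ℕ)+1) (((Finset.Icc 1 n).filter fun i => i < j - 1 ∧ oneline π (j-1) < oneline π i).image
          (fun i => if i < (p:ℕ)+1 then i else i + 1)) := by
    ext i
    simp only [Finset.mem_insert, Finset.mem_image, Finset.mem_filter, Finset.mem_Icc]
    constructor
    · rintro ⟨⟨ha, hb⟩, hij, ho⟩
      rw [holj] at ho
      by_cases hip : i = (p:ℕ)+1
      · exact Or.inl hip
      right
      rcases Nat.lt_or_ge i ((p:ℕ)+1) with hc | hc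
      · rw [oneline_ins_lt p π ha hc] at ho
        exact ⟨i, ⟨⟨ha, by omega⟩, by omega, ho⟩, by rw [if_pos hc]⟩
      · rw [oneline_ins_gt p π (by omega) hb] at ho
        exact ⟨i - 1, ⟨⟨by omega, by omega⟩, by omega, ho⟩, by rw [if_neg (by omega)]; omega⟩
    · rintro (rfl | ⟨i', ⟨⟨ha, hb⟩, hij, ho⟩, rfl⟩)
      · refine ⟨⟨by omega, by omega⟩, h1, ?_⟩
        rw [holj, oneline_ins_at' p π]
        have := oneline_le π (j-1); omega
      · rcases Nat.lt_or_ge i' ((p:ℕ)+1) with hc | hc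
        · rw [if_pos hc]
          refine ⟨⟨ha, by omega⟩, by omega, ?_⟩
          rw [holj, oneline_ins_lt p π ha hc]
          exact ho
        · rw [if_neg (by omega)]
          refine ⟨⟨by omega, by omega⟩, by omega, ?_⟩
          rw [holj, oneline_ins_gt p π (by omega) (by omega)]
          simpa using ho
  rw [hset, Finset.card_insert_of_notMem, Finset.card_image_of_injOn]
  · intro a ha b hb hab
    simp only at hab
    split_ifs at hab <;> omega
  · simp only [Finset.mem_image, Finset.mem_filter, Finset.mem_Icc]
    rintro ⟨x, ⟨⟨hx1, hx2⟩, -, -⟩, hfx⟩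
    split_ifs at hfx <;> omega

end Aux2
section Aux3
variable {n : ℕ}

lemma invNum_eq_sum_invEnd (σ : Equiv.Perm (Fin n)) :
    invNum σ = ∑ j ∈ Finset.Icc 1 n, invEnd σ j := by
  unfold invNum invEnd
  rw [Finset.card_eq_sum_card_fiberwise (f := Prod.snd) (t := Finset.Icc 1 n)]
  · apply Finset.sum_congr rfl
    intro j hj
    apply Finset.card_nbij' (fun p => p.1) (fun i => (i, j))
    · rintro ⟨a, b⟩ hab
      simp only [Finset.coe_filter, Finset.mem_filter, Finset.mem_product] at hab ⊢
      obtain ⟨⟨⟨h1, h2⟩, h3, h4⟩, rfl⟩ := hab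
      exact ⟨h1, h3, h4⟩
    · intro i hi
      simp only [Finset.coe_filter, Finset.mem_filter, Finset.mem_product] at hi ⊢
      exact ⟨⟨⟨hi.1, hj⟩, hi.2.1, hi.2.2⟩, rfl⟩
    · rintro ⟨a, b⟩ hab
      simp only [Finset.coe_filter, Finset.mem_filter] at hab
      obtain ⟨-, rfl⟩ := hab
      rfl
    · intro i hi; rfl
  · rintro ⟨a, b⟩ hab
    simp only [Finset.coe_filter, Finset.mem_filter, Finset.mem_product] at hab
    exact hab.1.2

lemma invNum_ins (p : Fin (n+1)) (π : Equiv.Perm (Fin n)) :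
    invNum (ins p π) = invNum π + (n + 1 - ((p:ℕ) + 1)) := by
  have hp := p.isLt
  rw [invNum_eq_sum_invEnd, invNum_eq_sum_invEnd]
  have hsplit : Finset.Icc 1 (n+1) = Finset.Icc 1 ((p:ℕ)) ∪ Finset.Icc ((p:ℕ)+1) (n+1) := by
    ext x; simp [Finset.mem_Icc, Finset.mem_union]; omega
  have hdisj : Disjoint (Finset.Icc 1 ((p:ℕ))) (Finset.Icc ((p:ℕ)+1) (n+1)) := by
    simp [Finset.disjoint_left, Finset.mem_Icc]; omega
  rw [hsplit, Finset.sum_union hdisj]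
  have h1 : ∑ j ∈ Finset.Icc 1 ((p:ℕ)), invEnd (ins p π) j
      = ∑ j ∈ Finset.Icc 1 ((p:ℕ)), invEnd π j := by
    apply Finset.sum_congr rfl
    intro j hj
    simp only [Finset.mem_Icc] at hj
    exact invEnd_ins_lt p π j hj.1 (by omega)
  have h2 : ∑ j ∈ Finset.Icc ((p:ℕ)+1) (n+1), invEnd (ins p π) j
      = ∑ j ∈ Finset.Icc ((p:ℕ)+1) n, invEnd π j + (n + 1 - ((p:ℕ)+1)) := by
    have e : Finset.Icc ((p:ℕ)+1) (n+1) = insert ((p:ℕ)+1) (Finset.Icc ((p:ℕ)+2) (n+1)) := by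
      ext x; simp [Finset.mem_Icc, Finset.mem_insert]; omega
    rw [e, Finset.sum_insert (by simp [Finset.mem_Icc])]
    rw [invEnd_ins_self]
    have e2 : ∑ j ∈ Finset.Icc ((p:ℕ)+2) (n+1), invEnd (ins p π) j
        = ∑ j ∈ Finset.Icc ((p:ℕ)+2) (n+1), (invEnd π (j-1) + 1) := by
      apply Finset.sum_congr rfl
      intro j hj
      simp only [Finset.mem_Icc] at hj
      exact invEnd_ins_gt p π j (by omega) hj.2
    rw [e2, Finset.sum_add_distrib, Finset.sum_const, Nat.card_Icc, smul_eq_mul, mul_one]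
    have e3 : ∑ j ∈ Finset.Icc ((p:ℕ)+2) (n+1), invEnd π (j-1)
        = ∑ j ∈ Finset.Icc ((p:ℕ)+1) n, invEnd π j := by
      apply Finset.sum_nbij' (fun j => j - 1) (fun j => j + 1)
      · intro a ha; simp only [Finset.mem_Icc] at *; omega
      · intro a ha; simp only [Finset.mem_Icc] at *; omega
      · intro a ha; simp only [Finset.mem_Icc] at ha; omega
      · intro a ha; simp only [Finset.mem_Icc] at ha; omega
      · intro a ha; rfl
    rw [e3]
    omega
  rw [h1, h2, ← Nat.add_assoc, ← Finset.sum_union]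
  · congr 2
    ext x; simp [Finset.mem_Icc, Finset.mem_union]; omega
  · simp [Finset.disjoint_left, Finset.mem_Icc]; omega

lemma invEnd_succ_of_des (σ : Equiv.Perm (Fin n)) {i : ℕ} (hi : i ∈ DesSet σ) :
    invEnd σ i + 1 ≤ invEnd σ (i + 1) := by
  rw [mem_des_iff] at hi
  obtain ⟨h1, h2, h3⟩ := hi
  unfold invEnd
  have hsub : insert i ((Finset.Icc 1 n).filter fun j => j < i ∧ oneline σ i < oneline σ j)
      ⊆ (Finset.Icc 1 n).filter fun j => j < i + 1 ∧ oneline σ (i+1) < oneline σ j := by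
    intro x hx
    simp only [Finset.mem_insert, Finset.mem_filter, Finset.mem_Icc] at hx ⊢
    rcases hx with rfl | ⟨⟨ha, hb⟩, hc, hd⟩
    · exact ⟨⟨h1, by omega⟩, by omega, h3⟩
    · exact ⟨⟨ha, hb⟩, by omega, by omega⟩
  have := Finset.card_le_card hsub
  rw [Finset.card_insert_of_notMem (by simp [Finset.mem_filter])] at this
  omega

lemma sum_star_le_invNum (σ : Equiv.Perm (Fin n)) {S : Finset ℕ} (hS : S ⊆ DesSet σ) :
    ∑ i ∈ S, (1 + invEnd σ i) ≤ invNum σ := by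
  have step1 : ∑ i ∈ S, (1 + invEnd σ i) ≤ ∑ i ∈ S, invEnd σ (i + 1) := by
    apply Finset.sum_le_sum
    intro i hi
    have := invEnd_succ_of_des σ (hS hi)
    omega
  have step2 : ∑ i ∈ S, invEnd σ (i + 1) = ∑ j ∈ S.image (· + 1), invEnd σ j := by
    rw [Finset.sum_image (by intro x _ y _ h; simp only at h; omega)]
  have step3 : ∑ j ∈ S.image (· + 1), invEnd σ j ≤ ∑ j ∈ Finset.Icc 1 n, invEnd σ j := by
    apply Finset.sum_le_sum_of_subset
    intro x hx
    simp only [Finset.mem_image] at hx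
    obtain ⟨a, ha, rfl⟩ := hx
    have := hS ha
    rw [mem_des_iff] at this
    simp only [Finset.mem_Icc]
    omega
  rw [invNum_eq_sum_invEnd]
  omega

/-- key counting lemma: sum over a finset of q^(number of larger elements). -/
lemma sum_pow_card_gt {R : Type*} [CommRing R] (q : R) (V : Finset ℕ) :
    ∑ P ∈ V, q ^ (V.filter (fun Q => P < Q)).card = qnum q V.card := by
  suffices H : ∀ (m : ℕ) (V : Finset ℕ), V.card = m →
      ∑ P ∈ V, q ^ (V.filter (fun Q => P < Q)).card = qnum q V.card by
    exact H V.card V rfl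
  intro m
  induction m with
  | zero =>
    intro V hn
    rw [Finset.card_eq_zero] at hn
    subst hn; simp [qnum]
  | succ m ih =>
    intro V hn
    have hne : V.Nonempty := by rw [← Finset.card_pos, hn]; omega
    set M := V.max' hne with hM
    have hMV : M ∈ V := V.max'_mem hne
    have hV : V = insert M (V.erase M) := by rw [Finset.insert_erase hMV]
    have hcard : (V.erase M).card = m := by
      rw [Finset.card_erase_of_mem hMV]; omega
    rw [← Finset.add_sum_erase _ _ hMV]
    have hMax : (V.filter (fun Q => M < Q)).card = 0 := by
      rw [Finset.card_eq_zero, Finset.filter_eq_empty_iff]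
      intro x hx
      have := V.le_max' x hx
      omega
    have hterm : ∀ P ∈ V.erase M, q ^ (V.filter (fun Q => P < Q)).card
        = q * q ^ ((V.erase M).filter (fun Q => P < Q)).card := by
      intro P hP
      have hPM : P < M := by
        have h1 := V.le_max' P (Finset.mem_of_mem_erase hP)
        have h2 := Finset.ne_of_mem_erase hP
        omega
      have : V.filter (fun Q => P < Q) = insert M ((V.erase M).filter (fun Q => P < Q)) := by
        ext x
        simp only [Finset.mem_filter, Finset.mem_insert, Finset.mem_erase]
        constructor
        · rintro ⟨hx, hPx⟩
          by_cases hxM : x = M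
          · exact Or.inl hxM
          · exact Or.inr ⟨⟨hxM, hx⟩, hPx⟩
        · rintro (rfl | ⟨⟨-, hx⟩, hPx⟩)
          · exact ⟨hMV, hPM⟩
          · exact ⟨hx, hPx⟩
      rw [this, Finset.card_insert_of_notMem (by simp [Finset.mem_filter])]
      ring
    rw [Finset.sum_congr rfl hterm, hMax, ← Finset.mul_sum, ih _ hcard, hcard, hn]
    have : qnum q (m + 1) = 1 + q * qnum q m := by
      unfold qnum
      rw [Finset.sum_range_succ' (fun i => q ^ i) m]
      simp [Finset.mul_sum, pow_succ, add_comm, mul_comm]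
    rw [this, pow_zero]

/-- valid insertion positions for a star set `T`. -/
def validPos (N : ℕ) (T : Finset ℕ) : Finset ℕ :=
  (Finset.Icc 1 N).filter fun P => P - 1 ∉ T

lemma validPos_card {N : ℕ} {T : Finset ℕ} (hT : T ⊆ Finset.Icc 1 (N - 1)) :
    (validPos N T).card = N - T.card := by
  unfold validPos
  have h := Finset.card_filter_add_card_filter_not (s := Finset.Icc 1 N)
    (p := fun P => P - 1 ∈ T)
  have himg : (Finset.Icc 1 N).filter (fun P => P - 1 ∈ T) = T.image (· + 1) := by
    ext P
    simp only [Finset.mem_filter, Finset.mem_Icc, Finset.mem_image]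
    constructor
    · rintro ⟨⟨h1, h2⟩, h3⟩
      have := hT h3
      simp only [Finset.mem_Icc] at this
      exact ⟨P - 1, h3, by omega⟩
    · rintro ⟨t, ht, rfl⟩
      have := hT ht
      simp only [Finset.mem_Icc] at this
      exact ⟨⟨by omega, by omega⟩, by simpa using ht⟩
  have hcardimg : ((Finset.Icc 1 N).filter (fun P => P - 1 ∈ T)).card = T.card := by
    rw [himg, Finset.card_image_of_injOn (fun x _ y _ h => by simpa using h)]
  have hN : (Finset.Icc 1 N).card = N := by simp
  have e : ((Finset.Icc 1 N).filter fun P => P - 1 ∉ T)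
      = (Finset.Icc 1 N) \ ((Finset.Icc 1 N).filter fun P => P - 1 ∈ T) := by
    ext P
    simp only [Finset.mem_filter, Finset.mem_sdiff]
    tauto
  rw [e, Finset.card_sdiff_of_subset (Finset.filter_subset _ _), hcardimg, hN]

lemma validPos_filter_card {N P : ℕ} {T : Finset ℕ} (hT : T ⊆ Finset.Icc 1 (N - 1))
    (hP1 : 1 ≤ P) (hPN : P ≤ N) :
    ((validPos N T).filter (fun Q => P < Q)).card
      = (N - P) - (T.filter (fun i => P ≤ i)).card := by
  unfold validPos
  rw [Finset.filter_filter]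
  have key : (Finset.Icc (P+1) N).filter (fun Q => Q - 1 ∈ T)
      = (T.filter (fun i => P ≤ i)).image (· + 1) := by
    ext Q
    simp only [Finset.mem_filter, Finset.mem_Icc, Finset.mem_image]
    constructor
    · rintro ⟨⟨h1, h2⟩, h3⟩
      exact ⟨Q - 1, ⟨h3, by omega⟩, by omega⟩
    · rintro ⟨t, ⟨ht, hPt⟩, rfl⟩
      have := hT ht
      simp only [Finset.mem_Icc] at this
      exact ⟨⟨by omega, by omega⟩, by simpa using ht⟩
  have hre : ((Finset.Icc 1 N).filter fun Q => Q - 1 ∉ T ∧ P < Q)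
      = (Finset.Icc (P+1) N).filter (fun Q => ¬ (Q - 1 ∈ T)) := by
    ext Q
    simp only [Finset.mem_filter, Finset.mem_Icc]
    constructor
    · rintro ⟨⟨h1, h2⟩, h3, h4⟩; exact ⟨⟨by omega, h2⟩, h3⟩
    · rintro ⟨⟨h1, h2⟩, h3⟩; exact ⟨⟨by omega, h2⟩, h3, by omega⟩
  rw [hre]
  have e : ((Finset.Icc (P+1) N).filter fun Q => ¬ (Q - 1 ∈ T))
      = (Finset.Icc (P+1) N) \ ((Finset.Icc (P+1) N).filter fun Q => Q - 1 ∈ T) := by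
    ext Q
    simp only [Finset.mem_filter, Finset.mem_sdiff]
    tauto
  have h2 : ((Finset.Icc (P+1) N).filter (fun Q => Q - 1 ∈ T)).card
      = (T.filter (fun i => P ≤ i)).card := by
    rw [key, Finset.card_image_of_injOn (fun x _ y _ hh => by simpa using hh)]
  have h3 : (Finset.Icc (P+1) N).card = N - P := by
    rw [Nat.card_Icc]; omega
  rw [e, Finset.card_sdiff_of_subset (Finset.filter_subset _ _), h2, h3]

end Aux3
section Aux4
variable {n : ℕ}

def shrinkF (P : ℕ) (i : ℕ) : ℕ := if i < P then i else i - 1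
def growF (P : ℕ) (i : ℕ) : ℕ := if i < P then i else i + 1

lemma mem_starSets {D S : Finset ℕ} {k : ℕ} : S ∈ starSets D k ↔ S ⊆ D ∧ S.card = k := by
  simp [starSets]

lemma des_bounds {m : ℕ} {σ : Equiv.Perm (Fin m)} {i : ℕ} (h : i ∈ DesSet σ) :
    1 ≤ i ∧ i ≤ m - 1 := by
  rw [mem_des_iff] at h; exact ⟨h.1, h.2.1⟩

lemma injOn_shrinkF {P : ℕ} {T : Finset ℕ} (hP : P ∉ T) : Set.InjOn (shrinkF P) T := by
  intro a ha b hb hab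
  simp only [Finset.mem_coe] at ha hb
  have ha' : a ≠ P := fun h => hP (h ▸ ha)
  have hb' : b ≠ P := fun h => hP (h ▸ hb)
  unfold shrinkF at hab
  split_ifs at hab <;> omega

lemma injOn_growF {P : ℕ} {T : Finset ℕ} : Set.InjOn (growF P) T := by
  intro a _ b _ hab
  unfold growF at hab
  split_ifs at hab <;> omega

lemma pm1_not_mem {p : Fin (n+1)} {π : Equiv.Perm (Fin n)} {S : Finset ℕ}
    (hS : S ⊆ DesSet (ins p π)) : (p : ℕ) ∉ S := by
  intro h
  have := (mem_des_ins p π (p:ℕ)).mp (hS h)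
  omega

lemma shrink_subset_des {p : Fin (n+1)} {π : Equiv.Perm (Fin n)} {S : Finset ℕ}
    (hS : S ⊆ DesSet (ins p π)) (hP : ((p:ℕ)+1) ∉ S) :
    S.image (shrinkF ((p:ℕ)+1)) ⊆ DesSet π := by
  intro x hx
  simp only [Finset.mem_image] at hx
  obtain ⟨i, hi, rfl⟩ := hx
  have hd := (mem_des_ins p π i).mp (hS hi)
  have hiP : i ≠ (p:ℕ)+1 := fun h => hP (h ▸ hi)
  unfold shrinkF
  rcases hd with ⟨h1, h2⟩ | ⟨h1, -⟩ | ⟨h1, -, h3⟩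
  · rw [if_pos (by omega)]; exact h2
  · omega
  · rw [if_neg (by omega)]; exact h3

lemma shrink_pm1_not_mem {p : Fin (n+1)} {π : Equiv.Perm (Fin n)} {S : Finset ℕ}
    (hS : S ⊆ DesSet (ins p π)) (hP : ((p:ℕ)+1) ∉ S) :
    (p : ℕ) ∉ S.image (shrinkF ((p:ℕ)+1)) := by
  intro h
  simp only [Finset.mem_image] at h
  obtain ⟨i, hi, he⟩ := h
  have h1 := pm1_not_mem hS
  have hiP : i ≠ (p:ℕ)+1 := fun h => hP (h ▸ hi)
  have h2 : i ≠ (p:ℕ) := fun h => h1 (h ▸ hi)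
  unfold shrinkF at he
  have := (des_bounds (hS hi)).1
  split_ifs at he <;> omega

lemma grow_subset_des {p : Fin (n+1)} {π : Equiv.Perm (Fin n)} {S' : Finset ℕ}
    (hS' : S' ⊆ DesSet π) (hnot : (p : ℕ) ∉ S') :
    S'.image (growF ((p:ℕ)+1)) ⊆ DesSet (ins p π) := by
  intro x hx
  simp only [Finset.mem_image] at hx
  obtain ⟨i, hi, rfl⟩ := hx
  have hb := des_bounds (hS' hi)
  have hip : i ≠ (p:ℕ) := fun h => hnot (h ▸ hi)
  rw [mem_des_ins]
  unfold growF
  rcases Nat.lt_or_ge i ((p:ℕ)+1) with hc | hc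
  · rw [if_pos hc]
    exact Or.inl ⟨by omega, hS' hi⟩
  · rw [if_neg (by omega)]
    exact Or.inr (Or.inr ⟨by omega, by omega, by simpa using hS' hi⟩)

lemma p1_not_mem_grow {P : ℕ} {S' : Finset ℕ} : P ∉ S'.image (growF P) := by
  intro h
  simp only [Finset.mem_image] at h
  obtain ⟨i, -, he⟩ := h
  unfold growF at he
  split_ifs at he <;> omega

lemma grow_shrink_id {P : ℕ} {T : Finset ℕ} (h1 : P ∉ T) (h0 : ∀ i ∈ T, 1 ≤ i) :
    (T.image (shrinkF P)).image (growF P) = T := by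
  rw [Finset.image_image]
  have : Set.EqOn (growF P ∘ shrinkF P) id T := by
    intro i hi
    simp only [Finset.mem_coe] at hi
    have hiP : i ≠ P := fun h => h1 (h ▸ hi)
    have := h0 i hi
    simp only [Function.comp_apply, id_eq, shrinkF, growF]
    split_ifs <;> omega
  rw [Finset.image_congr this, Finset.image_id]

lemma shrink_grow_id {P : ℕ} {T : Finset ℕ} :
    (T.image (growF P)).image (shrinkF P) = T := by
  rw [Finset.image_image]
  have : Set.EqOn (shrinkF P ∘ growF P) id T := by
    intro i _
    simp only [Function.comp_apply, id_eq, shrinkF, growF]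
    split_ifs <;> omega
  rw [Finset.image_congr this, Finset.image_id]

lemma sum_invEnd_shrink (p : Fin (n+1)) (π : Equiv.Perm (Fin n)) {T : Finset ℕ}
    (hT : T ⊆ DesSet (ins p π)) (hP : ((p:ℕ)+1) ∉ T) :
    ∑ i ∈ T, (1 + invEnd (ins p π) i)
      = ∑ i' ∈ T.image (shrinkF ((p:ℕ)+1)), (1 + invEnd π i')
        + (T.filter (fun i => (p:ℕ)+1 < i)).card := by
  rw [Finset.sum_image (fun x hx y hy h => injOn_shrinkF hP hx hy h)]
  rw [Finset.card_filter, ← Finset.sum_add_distrib]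
  apply Finset.sum_congr rfl
  intro i hi
  have hb := des_bounds (hT hi)
  have hiP : i ≠ (p:ℕ)+1 := fun h => hP (h ▸ hi)
  simp only [Nat.add_sub_cancel] at hb
  unfold shrinkF
  rcases Nat.lt_or_ge i ((p:ℕ)+1) with hc | hc
  · rw [if_pos hc, if_neg (by omega), invEnd_ins_lt p π i hb.1 hc]
    omega
  · rw [if_neg (by omega), if_pos (by omega), invEnd_ins_gt p π i (by omega) (by omega)]
    omega

lemma filter_ge_shrink (p : Fin (n+1)) {T : Finset ℕ} (hP : ((p:ℕ)+1) ∉ T) :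
    ((T.image (shrinkF ((p:ℕ)+1))).filter (fun i => (p:ℕ)+1 ≤ i)).card
      = (T.filter (fun i => (p:ℕ)+1 < i)).card := by
  have he : (T.image (shrinkF ((p:ℕ)+1))).filter (fun i => (p:ℕ)+1 ≤ i)
      = (T.filter (fun i => (p:ℕ)+1 < i)).image (shrinkF ((p:ℕ)+1)) := by
    ext x
    simp only [Finset.mem_filter, Finset.mem_image]
    constructor
    · rintro ⟨⟨i, hi, rfl⟩, hge⟩
      have hiP : i ≠ (p:ℕ)+1 := fun h => hP (h ▸ hi)
      refine ⟨i, ⟨hi, ?_⟩, rfl⟩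
      unfold shrinkF at hge
      split_ifs at hge <;> omega
    · rintro ⟨i, ⟨hi, hgt⟩, rfl⟩
      refine ⟨⟨i, hi, rfl⟩, ?_⟩
      unfold shrinkF
      rw [if_neg (by omega)]; omega
  rw [he, Finset.card_image_of_injOn
    (Set.InjOn.mono (fun x hx => (Finset.mem_filter.mp hx).1) (injOn_shrinkF hP))]

lemma card_filter_ge_le {N P : ℕ} {T : Finset ℕ} (hT : T ⊆ Finset.Icc 1 (N-1)) (hP : 1 ≤ P) :
    (T.filter (fun i => P ≤ i)).card ≤ N - P := by
  have hsub : T.filter (fun i => P ≤ i) ⊆ Finset.Icc P (N-1) := by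
    intro x hx
    simp only [Finset.mem_filter] at hx
    have := hT hx.1
    simp only [Finset.mem_Icc] at this ⊢
    omega
  have := Finset.card_le_card hsub
  rw [Nat.card_Icc] at this
  omega

lemma starInv_ins_unstarred (p : Fin (n+1)) (π : Equiv.Perm (Fin n)) {S : Finset ℕ}
    (hS : S ⊆ DesSet (ins p π)) (hP : ((p:ℕ)+1) ∉ S) :
    starInv (ins p π) S
      = starInv π (S.image (shrinkF ((p:ℕ)+1)))
        + ((validPos (n+1) (S.image (shrinkF ((p:ℕ)+1)))).filter (fun Q => (p:ℕ)+1 < Q)).card := by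
  have hp := p.isLt
  set P := (p:ℕ)+1 with hPdef
  set S' := S.image (shrinkF P) with hS'def
  have hS'des : S' ⊆ DesSet π := shrink_subset_des hS hP
  have hS'Icc : S' ⊆ Finset.Icc 1 (n-1) := fun x hx => by
    have := des_bounds (hS'des hx); simp only [Finset.mem_Icc]; omega
  have hS'Icc2 : S' ⊆ Finset.Icc 1 ((n+1)-1) := fun x hx => by
    have := hS'Icc hx; simp only [Finset.mem_Icc] at this ⊢; omega
  have hw := validPos_filter_card (N := n+1) (P := P) hS'Icc2 (by omega) (by omega)
  have hsum := sum_invEnd_shrink p π hS hP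
  have hcard := filter_ge_shrink p hP
  have hineq1 := sum_star_le_invNum (ins p π) hS
  have hineq2 := sum_star_le_invNum π hS'des
  have hinv := invNum_ins p π
  have hle := card_filter_ge_le (N := n+1) (P := P) hS'Icc2 (by omega)
  unfold starInv
  simp only [← hPdef, ← hS'def] at hsum hcard hinv
  omega

lemma starInv_ins_starred (p : Fin (n+1)) (π : Equiv.Perm (Fin n)) {S : Finset ℕ}
    (hS : S ⊆ DesSet (ins p π)) (hP : ((p:ℕ)+1) ∈ S) :
    starInv (ins p π) S
      = starInv π ((S.erase ((p:ℕ)+1)).image (shrinkF ((p:ℕ)+1)))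
        + ((validPos n ((S.erase ((p:ℕ)+1)).image (shrinkF ((p:ℕ)+1)))).filter
            (fun Q => (p:ℕ)+1 < Q)).card := by
  have hp := p.isLt
  set P := (p:ℕ)+1 with hPdef
  have hPn : P ≤ n := by
    have := des_bounds (hS hP); simp only [Nat.add_sub_cancel] at this; omega
  set T := S.erase P with hTdef
  have hTsub : T ⊆ DesSet (ins p π) := fun x hx => hS (Finset.mem_of_mem_erase hx)
  have hTP : P ∉ T := Finset.notMem_erase _ _
  set S' := T.image (shrinkF P) with hS'def
  have hS'des : S' ⊆ DesSet π := shrink_subset_des hTsub hTP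
  have hS'Icc : S' ⊆ Finset.Icc 1 (n-1) := fun x hx => by
    have := des_bounds (hS'des hx); simp only [Finset.mem_Icc]; omega
  have hw := validPos_filter_card (N := n) (P := P) hS'Icc (by omega) hPn
  have hsum := sum_invEnd_shrink p π hTsub hTP
  have hcard := filter_ge_shrink (T := T) p hTP
  have hineq1 := sum_star_le_invNum (ins p π) hS
  have hineq2 := sum_star_le_invNum π hS'des
  have hinv := invNum_ins p π
  have hle := card_filter_ge_le (N := n) (P := P) hS'Icc (by omega)
  have hsplit : ∑ i ∈ S, (1 + invEnd (ins p π) i)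
      = (1 + invEnd (ins p π) P) + ∑ i ∈ T, (1 + invEnd (ins p π) i) := by
    rw [hTdef]
    exact (Finset.add_sum_erase S (fun i => 1 + invEnd (ins p π) i) hP).symm
  have hz := invEnd_ins_self p π
  unfold starInv
  simp only [← hPdef, ← hS'def] at hsum hcard hinv hz
  omega

end Aux4
section Aux5
variable {n : ℕ}

lemma sigma_ext' {α β : Type*} {a a' : α} {b b' : β} (h1 : a = a') (h2 : b = b') :
    (Sigma.mk a b : (_ : α) × β) = Sigma.mk a' b' := by subst h1; subst h2; rfl

def mkFin (n P : ℕ) : Fin (n+1) := ⟨(P - 1) % (n+1), Nat.mod_lt _ (Nat.succ_pos n)⟩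

lemma mkFin_val {n P : ℕ} (h2 : P ≤ n+1) : ((mkFin n P) : ℕ) = P - 1 := by
  simp only [mkFin]
  exact Nat.mod_eq_of_lt (by omega)

lemma sum_unstarred {R : Type*} [CommRing R] (q : R) (π : Equiv.Perm (Fin n)) (k : ℕ) :
    ∑ x ∈ (Finset.univ : Finset (Fin (n+1))).sigma
        (fun p => (starSets (DesSet (ins p π)) k).filter (fun S => ((p:ℕ)+1) ∉ S)),
      q ^ starInv (ins x.1 π) x.2
    = ∑ y ∈ (starSets (DesSet π) k).sigma (fun S' => validPos (n+1) S'),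
      q ^ (starInv π y.1 + ((validPos (n+1) y.1).filter (fun Q => y.2 < Q)).card) := by
  apply Finset.sum_nbij'
    (i := fun x => (⟨x.2.image (shrinkF ((x.1:ℕ)+1)), (x.1:ℕ)+1⟩ : (_ : Finset ℕ) × ℕ))
    (j := fun y => (⟨mkFin n y.2, y.1.image (growF y.2)⟩ : (_ : Fin (n+1)) × Finset ℕ))
  · rintro ⟨p, S⟩ hx
    try dsimp only
    simp only [Finset.mem_sigma, Finset.mem_filter, Finset.mem_univ, true_and] at hx
    obtain ⟨hmem, hP⟩ := hx
    rw [mem_starSets] at hmem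
    obtain ⟨hsub, hcard⟩ := hmem
    have hp := p.isLt
    simp only [Finset.mem_sigma]
    constructor
    · rw [mem_starSets]
      exact ⟨shrink_subset_des hsub hP,
        by rw [Finset.card_image_of_injOn (injOn_shrinkF hP)]; exact hcard⟩
    · simp only [validPos, Finset.mem_filter, Finset.mem_Icc, Nat.add_sub_cancel]
      exact ⟨⟨by omega, by omega⟩, shrink_pm1_not_mem hsub hP⟩
  · rintro ⟨S', P⟩ hy
    try dsimp only
    simp only [Finset.mem_sigma] at hy
    obtain ⟨hmem, hvP⟩ := hy
    rw [mem_starSets] at hmem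
    obtain ⟨hsub, hcard⟩ := hmem
    simp only [validPos, Finset.mem_filter, Finset.mem_Icc] at hvP
    obtain ⟨⟨hP1, hP2⟩, hnot⟩ := hvP
    have hv : ((mkFin n P) : ℕ) = P - 1 := mkFin_val hP2
    have hPe : ((mkFin n P) : ℕ) + 1 = P := by omega
    simp only [Finset.mem_sigma, Finset.mem_filter, Finset.mem_univ, true_and]
    rw [hPe]
    refine ⟨?_, p1_not_mem_grow⟩
    rw [mem_starSets]
    constructor
    · have := grow_subset_des (p := mkFin n P) hsub (by rw [hv]; exact hnot)
      rwa [hPe] at this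
    · rw [Finset.card_image_of_injOn injOn_growF]; exact hcard
  · rintro ⟨p, S⟩ hx
    try dsimp only
    simp only [Finset.mem_sigma, Finset.mem_filter, Finset.mem_univ, true_and] at hx
    obtain ⟨hmem, hP⟩ := hx
    rw [mem_starSets] at hmem
    obtain ⟨hsub, hcard⟩ := hmem
    have hp := p.isLt
    apply sigma_ext'
    · apply Fin.ext
      rw [mkFin_val (by omega)]
      simp only [Nat.add_sub_cancel]
    · exact grow_shrink_id hP (fun i hi => (des_bounds (hsub hi)).1)
  · rintro ⟨S', P⟩ hy
    try dsimp only
    simp only [Finset.mem_sigma] at hy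
    obtain ⟨hmem, hvP⟩ := hy
    simp only [validPos, Finset.mem_filter, Finset.mem_Icc] at hvP
    obtain ⟨⟨hP1, hP2⟩, hnot⟩ := hvP
    have hv : ((mkFin n P) : ℕ) = P - 1 := mkFin_val hP2
    have hPe : ((mkFin n P) : ℕ) + 1 = P := by omega
    apply sigma_ext'
    · rw [hPe]
      exact shrink_grow_id
    · exact hPe
  · rintro ⟨p, S⟩ hx
    try dsimp only
    simp only [Finset.mem_sigma, Finset.mem_filter, Finset.mem_univ, true_and] at hx
    obtain ⟨hmem, hP⟩ := hx
    rw [mem_starSets] at hmem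
    obtain ⟨hsub, hcard⟩ := hmem
    rw [starInv_ins_unstarred p π hsub hP]

lemma sum_starred {R : Type*} [CommRing R] (q : R) (π : Equiv.Perm (Fin n)) (k : ℕ) :
    ∑ x ∈ (Finset.univ : Finset (Fin (n+1))).sigma
        (fun p => (starSets (DesSet (ins p π)) (k+1)).filter (fun S => ((p:ℕ)+1) ∈ S)),
      q ^ starInv (ins x.1 π) x.2
    = ∑ y ∈ (starSets (DesSet π) k).sigma (fun S' => validPos n S'),
      q ^ (starInv π y.1 + ((validPos n y.1).filter (fun Q => y.2 < Q)).card) := by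
  apply Finset.sum_nbij'
    (i := fun x => (⟨(x.2.erase ((x.1:ℕ)+1)).image (shrinkF ((x.1:ℕ)+1)), (x.1:ℕ)+1⟩ :
      (_ : Finset ℕ) × ℕ))
    (j := fun y => (⟨mkFin n y.2, insert y.2 (y.1.image (growF y.2))⟩ :
      (_ : Fin (n+1)) × Finset ℕ))
  · rintro ⟨p, S⟩ hx
    try dsimp only
    simp only [Finset.mem_sigma, Finset.mem_filter, Finset.mem_univ, true_and] at hx
    obtain ⟨hmem, hP⟩ := hx
    rw [mem_starSets] at hmem
    obtain ⟨hsub, hcard⟩ := hmem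
    have hp := p.isLt
    have hTsub : S.erase ((p:ℕ)+1) ⊆ DesSet (ins p π) :=
      fun x hx => hsub (Finset.mem_of_mem_erase hx)
    have hTP : ((p:ℕ)+1) ∉ S.erase ((p:ℕ)+1) := Finset.notMem_erase _ _
    have hPn : (p:ℕ)+1 ≤ n := by
      have := des_bounds (hsub hP); simp only [Nat.add_sub_cancel] at this; omega
    simp only [Finset.mem_sigma]
    constructor
    · rw [mem_starSets]
      refine ⟨shrink_subset_des hTsub hTP, ?_⟩
      rw [Finset.card_image_of_injOn (injOn_shrinkF hTP),
        Finset.card_erase_of_mem hP, hcard]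
      omega
    · simp only [validPos, Finset.mem_filter, Finset.mem_Icc, Nat.add_sub_cancel]
      exact ⟨⟨by omega, hPn⟩, shrink_pm1_not_mem hTsub hTP⟩
  · rintro ⟨S', P⟩ hy
    try dsimp only
    simp only [Finset.mem_sigma] at hy
    obtain ⟨hmem, hvP⟩ := hy
    rw [mem_starSets] at hmem
    obtain ⟨hsub, hcard⟩ := hmem
    simp only [validPos, Finset.mem_filter, Finset.mem_Icc] at hvP
    obtain ⟨⟨hP1, hP2⟩, hnot⟩ := hvP
    have hv : ((mkFin n P) : ℕ) = P - 1 := mkFin_val (by omega)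
    have hPe : ((mkFin n P) : ℕ) + 1 = P := by omega
    simp only [Finset.mem_sigma, Finset.mem_filter, Finset.mem_univ, true_and]
    rw [hPe]
    refine ⟨?_, Finset.mem_insert_self _ _⟩
    rw [mem_starSets]
    constructor
    · intro x hx
      rcases Finset.mem_insert.mp hx with rfl | hx'
      · rw [mem_des_ins]
        have e : (x : ℕ) = ((mkFin n x) : ℕ) + 1 := hPe.symm
        exact Or.inr (Or.inl ⟨hPe.symm, hP2⟩)
      · exact (by
          have := grow_subset_des (p := mkFin n P) hsub (by rw [hv]; exact hnot)
          rw [hPe] at this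
          exact this hx')
    · rw [Finset.card_insert_of_notMem p1_not_mem_grow,
        Finset.card_image_of_injOn injOn_growF, hcard]
  · rintro ⟨p, S⟩ hx
    try dsimp only
    simp only [Finset.mem_sigma, Finset.mem_filter, Finset.mem_univ, true_and] at hx
    obtain ⟨hmem, hP⟩ := hx
    rw [mem_starSets] at hmem
    obtain ⟨hsub, hcard⟩ := hmem
    have hp := p.isLt
    have hTsub : S.erase ((p:ℕ)+1) ⊆ DesSet (ins p π) :=
      fun x hx => hsub (Finset.mem_of_mem_erase hx)
    have hTP : ((p:ℕ)+1) ∉ S.erase ((p:ℕ)+1) := Finset.notMem_erase _ _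
    apply sigma_ext'
    · apply Fin.ext
      rw [mkFin_val (by omega)]
      simp only [Nat.add_sub_cancel]
    · rw [grow_shrink_id hTP (fun i hi => (des_bounds (hTsub hi)).1),
        Finset.insert_erase hP]
  · rintro ⟨S', P⟩ hy
    try dsimp only
    simp only [Finset.mem_sigma] at hy
    obtain ⟨hmem, hvP⟩ := hy
    simp only [validPos, Finset.mem_filter, Finset.mem_Icc] at hvP
    obtain ⟨⟨hP1, hP2⟩, hnot⟩ := hvP
    have hv : ((mkFin n P) : ℕ) = P - 1 := mkFin_val (by omega)
    have hPe : ((mkFin n P) : ℕ) + 1 = P := by omega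
    apply sigma_ext'
    · rw [hPe, Finset.erase_insert p1_not_mem_grow]
      exact shrink_grow_id
    · exact hPe
  · rintro ⟨p, S⟩ hx
    try dsimp only
    simp only [Finset.mem_sigma, Finset.mem_filter, Finset.mem_univ, true_and] at hx
    obtain ⟨hmem, hP⟩ := hx
    rw [mem_starSets] at hmem
    obtain ⟨hsub, hcard⟩ := hmem
    rw [starInv_ins_starred p π hsub hP]

end Aux5
section Aux6
variable {n : ℕ}

lemma eval_B {R : Type*} [CommRing R] (q : R) (π : Equiv.Perm (Fin n)) (k N : ℕ) (hN : n ≤ N) :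
    ∑ y ∈ (starSets (DesSet π) k).sigma (fun S' => validPos N S'),
      q ^ (starInv π y.1 + ((validPos N y.1).filter (fun Q => y.2 < Q)).card)
    = qnum q (N - k) * ∑ S' ∈ starSets (DesSet π) k, q ^ starInv π S' := by
  rw [← Finset.sum_sigma' (starSets (DesSet π) k) (fun S' => validPos N S')
    (fun S' P => q ^ (starInv π S' + ((validPos N S').filter (fun Q => P < Q)).card))]
  rw [Finset.mul_sum]
  apply Finset.sum_congr rfl
  intro S' hS'
  rw [mem_starSets] at hS'
  have hsub : S' ⊆ Finset.Icc 1 (N - 1) := by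
    intro x hx
    have := des_bounds (hS'.1 hx)
    simp only [Finset.mem_Icc]
    omega
  have hcards : (validPos N S').card = N - k := by
    rw [validPos_card hsub, hS'.2]
  calc ∑ P ∈ validPos N S', q ^ (starInv π S' + ((validPos N S').filter (fun Q => P < Q)).card)
      = ∑ P ∈ validPos N S', q ^ starInv π S' * q ^ ((validPos N S').filter (fun Q => P < Q)).card := by
        apply Finset.sum_congr rfl; intro P _; rw [pow_add]
    _ = q ^ starInv π S' * ∑ P ∈ validPos N S', q ^ ((validPos N S').filter (fun Q => P < Q)).card := by
        rw [Finset.mul_sum]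
    _ = q ^ starInv π S' * qnum q (N - k) := by rw [sum_pow_card_gt, hcards]
    _ = qnum q (N - k) * q ^ starInv π S' := by ring

lemma ins_bijective :
    Function.Bijective (fun x : Fin (n+1) × Equiv.Perm (Fin n) => ins x.1 x.2) := by
  rw [Fintype.bijective_iff_injective_and_card]
  constructor
  · rintro ⟨p, π⟩ ⟨p', π'⟩ h
    simp only at h
    have hp : p = p' := by
      have h1 : ins p π p = Fin.last n := ins_at p π
      have h2 : ins p' π' p' = Fin.last n := ins_at p' π'
      rw [h] at h1
      exact Equiv.injective _ (h1.trans h2.symm)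
    subst hp
    have hπ : π = π' := by
      apply Equiv.ext
      intro j
      rcases Nat.lt_or_ge ((j : ℕ) : ℕ) (p : ℕ) with hc | hc
      · have e1 : ins p π j.castSucc = (π j).castSucc :=
          ins_below p π j (by simp [Fin.lt_def]; omega)
        have e2 : ins p π' j.castSucc = (π' j).castSucc :=
          ins_below p π' j (by simp [Fin.lt_def]; omega)
        rw [h] at e1
        have := e1.symm.trans e2
        exact Fin.castSucc_injective n this
      · have e1 : ins p π j.succ = (π j).castSucc :=
          ins_above p π j (by simp [Fin.le_def]; omega)
        have e2 : ins p π' j.succ = (π' j).castSucc :=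
          ins_above p π' j (by simp [Fin.le_def]; omega)
        rw [h] at e1
        have := e1.symm.trans e2
        exact Fin.castSucc_injective n this
    rw [hπ]
  · simp [Fintype.card_perm, Nat.factorial_succ]

lemma Dinv_succ {R : Type*} [CommRing R] (q : R) (k : ℕ) :
    Dinv q (n+1) k
      = qnum q (n+1-k) * (Dinv q n k + if k = 0 then 0 else Dinv q n (k-1)) := by
  unfold Dinv
  rw [← Fintype.sum_bijective (fun x : Fin (n+1) × Equiv.Perm (Fin n) => ins x.1 x.2)
      ins_bijective
      (fun x => ∑ S ∈ starSets (DesSet (ins x.1 x.2)) k, q ^ starInv (ins x.1 x.2) S)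
      (fun σ => ∑ S ∈ starSets (DesSet σ) k, q ^ starInv σ S) (fun x => rfl)]
  rw [Fintype.sum_prod_type, Finset.sum_comm]
  have key : ∀ π : Equiv.Perm (Fin n),
      ∑ p : Fin (n+1), ∑ S ∈ starSets (DesSet (ins p π)) k, q ^ starInv (ins p π) S
      = qnum q (n+1-k) * ((∑ S' ∈ starSets (DesSet π) k, q ^ starInv π S')
          + if k = 0 then 0 else ∑ S' ∈ starSets (DesSet π) (k-1), q ^ starInv π S') := by
    intro π
    have hsplit : ∀ p : Fin (n+1),
        ∑ S ∈ starSets (DesSet (ins p π)) k, q ^ starInv (ins p π) S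
        = (∑ S ∈ (starSets (DesSet (ins p π)) k).filter (fun S => ((p:ℕ)+1) ∈ S),
            q ^ starInv (ins p π) S)
          + ∑ S ∈ (starSets (DesSet (ins p π)) k).filter (fun S => ((p:ℕ)+1) ∉ S),
            q ^ starInv (ins p π) S :=
      fun p => (Finset.sum_filter_add_sum_filter_not _ _ _).symm
    rw [Finset.sum_congr rfl (fun p _ => hsplit p), Finset.sum_add_distrib]
    have hU : ∑ p : Fin (n+1),
        ∑ S ∈ (starSets (DesSet (ins p π)) k).filter (fun S => ((p:ℕ)+1) ∉ S),
          q ^ starInv (ins p π) S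
        = qnum q (n+1-k) * ∑ S' ∈ starSets (DesSet π) k, q ^ starInv π S' := by
      rw [Finset.sum_sigma' Finset.univ
        (fun p => (starSets (DesSet (ins p π)) k).filter (fun S => ((p:ℕ)+1) ∉ S))
        (fun p S => q ^ starInv (ins p π) S)]
      rw [sum_unstarred q π k, eval_B q π k (n+1) (by omega)]
    rcases k with _ | k'
    · have hz : ∀ p : Fin (n+1),
          (starSets (DesSet (ins p π)) 0).filter (fun S => ((p:ℕ)+1) ∈ S) = ∅ := by
        intro p
        rw [Finset.filter_eq_empty_iff]
        intro S hS
        rw [mem_starSets] at hS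
        rw [Finset.card_eq_zero.mp hS.2]
        simp
      rw [Finset.sum_congr rfl (fun p _ => by rw [hz p, Finset.sum_empty])]
      rw [Finset.sum_const, smul_zero, zero_add, hU]
      simp
    · have hS : ∑ p : Fin (n+1),
          ∑ S ∈ (starSets (DesSet (ins p π)) (k'+1)).filter (fun S => ((p:ℕ)+1) ∈ S),
            q ^ starInv (ins p π) S
          = qnum q (n-k') * ∑ S' ∈ starSets (DesSet π) k', q ^ starInv π S' := by
        rw [Finset.sum_sigma' Finset.univ
          (fun p => (starSets (DesSet (ins p π)) (k'+1)).filter (fun S => ((p:ℕ)+1) ∈ S))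
          (fun p S => q ^ starInv (ins p π) S)]
        rw [sum_starred q π k', eval_B q π k' n (le_refl n)]
      rw [hS, hU]
      have he : n - k' = n + 1 - (k' + 1) := by omega
      rw [he]
      simp only [Nat.add_sub_cancel, if_neg (Nat.succ_ne_zero k')]
      ring
  rw [Finset.sum_congr rfl (fun π _ => key π), ← Finset.mul_sum]
  congr 1
  rw [Finset.sum_add_distrib]
  congr 1
  by_cases hk : k = 0
  · simp [hk]
  · simp [hk]

lemma Dinv_one {R : Type*} [CommRing R] (q : R) : Dinv q 1 0 = 1 := by
  unfold Dinv
  have hdes : ∀ σ : Equiv.Perm (Fin 1), DesSet σ = ∅ := by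
    intro σ
    unfold DesSet
    rw [show (1:ℕ) - 1 = 0 from rfl, Finset.Icc_eq_empty (by omega), Finset.filter_empty]
  have hstar : starSets (∅ : Finset ℕ) 0 = {∅} := by
    unfold starSets
    rw [Finset.powerset_empty]
    apply Finset.filter_true_of_mem
    intro S hS
    rw [Finset.mem_singleton] at hS
    rw [hS]
    rfl
  have hinv : ∀ σ : Equiv.Perm (Fin 1), invNum σ = 0 := by
    intro σ
    unfold invNum
    rw [Finset.card_eq_zero, Finset.filter_eq_empty_iff]
    rintro ⟨a, b⟩ hab
    simp only [Finset.mem_product, Finset.mem_Icc] at hab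
    rintro ⟨h1, -⟩
    omega
  have : ∀ σ : Equiv.Perm (Fin 1),
      ∑ S ∈ starSets (DesSet σ) 0, q ^ starInv σ S = 1 := by
    intro σ
    rw [hdes σ, hstar, Finset.sum_singleton]
    unfold starInv
    rw [Finset.sum_empty, hinv σ]
    simp
  rw [Finset.sum_congr rfl (fun σ _ => this σ), Finset.sum_const, Finset.card_univ]
  simp [Fintype.card_perm]

lemma Dinv_diag_zero {R : Type*} [CommRing R] (q : R) {m : ℕ} (hm : 1 ≤ m) :
    Dinv q m m = 0 := by
  unfold Dinv
  have hz : ∀ σ : Equiv.Perm (Fin m), starSets (DesSet σ) m = ∅ := by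
    intro σ
    rw [Finset.eq_empty_iff_forall_notMem]
    intro S hS
    rw [mem_starSets] at hS
    have h1 : S.card ≤ (DesSet σ).card := Finset.card_le_card hS.1
    have h2 : (DesSet σ).card ≤ m - 1 := by
      unfold DesSet
      calc ((Finset.Icc 1 (m-1)).filter _).card ≤ (Finset.Icc 1 (m-1)).card :=
            Finset.card_filter_le _ _
        _ = m - 1 := by rw [Nat.card_Icc]; omega
    omega
  rw [Finset.sum_congr rfl (fun σ _ => by rw [hz σ, Finset.sum_empty])]
  simp

end Aux6

/-- D^{inv}_{n,n−1}(q) = 1 for n ≥ 1, and for all n ≥ 2 and 0 ≤ k ≤ n−2,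
D^{inv}_{n,k}(q) = [n−k]_q · D^{inv}_{n−1,k}(q) + [n−k]_q · D^{inv}_{n−1,k−1}(q),
with the convention D^{inv}_{n,−1}(q) = 0. -/
theorem statement6 {R : Type*} [CommRing R] (q : R) :
    (∀ n : ℕ, 1 ≤ n → Dinv q n (n - 1) = 1) ∧
    (∀ n k : ℕ, 2 ≤ n → k ≤ n - 2 →
      Dinv q n k =
        qnum q (n - k) * Dinv q (n - 1) k +
          qnum q (n - k) * (if k = 0 then 0 else Dinv q (n - 1) (k - 1))) := by
  constructor
  · intro n
    induction n with
    | zero => exact fun h => absurd h (by omega)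
    | succ m ih =>
      intro _
      by_cases hm : m = 0
      · subst hm
        simpa using Dinv_one q
      · have hm1 : 1 ≤ m := by omega
        rw [show m + 1 - 1 = m from rfl]
        rw [Dinv_succ q m, Dinv_diag_zero q hm1, if_neg hm, ih hm1]
        rw [show m + 1 - m = 1 by omega]
        simp [qnum]
  · intro n k hn hk
    obtain ⟨m, rfl⟩ : ∃ m, n = m + 1 := ⟨n - 1, by omega⟩
    rw [show m + 1 - 1 = m from rfl]
    rw [Dinv_succ q k]
    ring
end

section
/- Let q be an element of a commutative ring and write D^{maj}_{n,k}(q) = Σ_{(σ,S)∈𝔖^>_{n,k}} q^{maj((σ,S))}, with the convention D^{maj}_{n,−1}(q) = 0. Then D^{maj}_{n,n−1}(q) = 1 for all n ≥ 1, and for all n ≥ 2 and 0 ≤ k ≤ n−2, D^{maj}_{n,k}(q) = [n−k]_q · D^{maj}_{n−1,k}(q) + [n−k]_q · D^{maj}_{n−1,k−1}(q). -/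
open Finset

/-- D^{maj}_{n,k}(q) = Σ_{(σ,S)∈𝔖^>_{n,k}} q^{maj((σ,S))}. -/
def Dmaj {R : Type*} [CommRing R] (q : R) (n k : ℕ) : R :=
  ∑ σ : Equiv.Perm (Fin n), ∑ S ∈ starSets (DesSet σ) k, q ^ starMaj σ S























namespace S7

variable {R : Type*} [CommRing R] (q : R)

lemma qnum_zero : qnum q 0 = 0 := by simp [qnum]

lemma qnum_add (a b : ℕ) : qnum q (a + b) = qnum q a + q ^ a * qnum q b := by
  simp [qnum, Finset.sum_range_add, Finset.mul_sum, pow_add]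

lemma qnum_succ (m : ℕ) : qnum q (m + 1) = qnum q m + q ^ m := by
  simp [qnum, Finset.sum_range_succ]

lemma qnum_one_add (m : ℕ) : qnum q (m + 1) = 1 + q * qnum q m := by
  rw [show m + 1 = 1 + m by omega, qnum_add]; simp [qnum]

lemma qbinom_zero_right (j : ℕ) : qbinom q j 0 = 1 := by cases j <;> rfl

lemma qbinom_eq_zero : ∀ {j k : ℕ}, j < k → qbinom q j k = 0
  | 0, _ + 1, _ => rfl
  | j + 1, k + 1, h => by
      rw [show qbinom q (j+1) (k+1) = qbinom q j k + q ^ (k+1) * qbinom q j (k+1) from rfl,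
        qbinom_eq_zero (show j < k by omega), qbinom_eq_zero (show j < k + 1 by omega)]
      ring

lemma qbinom_self : ∀ j : ℕ, qbinom q j j = 1
  | 0 => rfl
  | j + 1 => by
      rw [show qbinom q (j+1) (j+1) = qbinom q j j + q ^ (j+1) * qbinom q j (j+1) from rfl,
        qbinom_self j, qbinom_eq_zero q (by omega)]
      ring

lemma qbinom_one : ∀ j : ℕ, qbinom q j 1 = qnum q j
  | 0 => by simp [qbinom, qnum]
  | j + 1 => by
      rw [show qbinom q (j+1) 1 = qbinom q j 0 + q ^ 1 * qbinom q j 1 from rfl,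
        qbinom_one j, qbinom_zero_right, qnum_one_add]
      ring

/-- dual Pascal: for k ≤ j, qbinom (j+1) (k+1) = q^(j-k) * qbinom j k + qbinom j (k+1) -/
lemma qbinom_dual_pascal : ∀ j k : ℕ, k ≤ j →
    qbinom q (j + 1) (k + 1) = q ^ (j - k) * qbinom q j k + qbinom q j (k + 1)
  | j, k, h => by
    rcases Nat.eq_or_lt_of_le h with h' | h'
    · subst h'
      rw [show qbinom q (k+1) (k+1) = 1 from qbinom_self q (k+1),
        show qbinom q k (k+1) = 0 from qbinom_eq_zero q (by omega),
        show qbinom q k k = 1 from qbinom_self q k]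
      simp
    · obtain ⟨j', rfl⟩ : ∃ j', j = j' + 1 := ⟨j - 1, by omega⟩
      rcases Nat.eq_zero_or_pos k with rfl | hk
      · rw [show (0:ℕ) + 1 = 1 from rfl, show qbinom q (j'+1+1) 1 = qnum q (j'+1+1) from qbinom_one q _,
          qbinom_one, qbinom_zero_right, show j' + 1 - 0 = j' + 1 by omega,
          qnum_succ q (j'+1)]
        ring
      · obtain ⟨k', rfl⟩ : ∃ k', k = k' + 1 := ⟨k - 1, by omega⟩
        obtain ⟨a, ha⟩ : ∃ a, j' - (k' + 1) = a := ⟨_, rfl⟩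
        have d0 : qbinom q (j'+1+1) (k'+1+1)
            = qbinom q (j'+1) (k'+1) + q ^ (k'+1+1) * qbinom q (j'+1) (k'+1+1) := rfl
        have d1 : qbinom q (j'+1) (k'+1)
            = qbinom q j' k' + q ^ (k'+1) * qbinom q j' (k'+1) := rfl
        have d2 : qbinom q (j'+1) (k'+1+1)
            = qbinom q j' (k'+1) + q ^ (k'+1+1) * qbinom q j' (k'+1+1) := rfl
        have i1 := qbinom_dual_pascal j' k' (by omega)
        have i2 := qbinom_dual_pascal j' (k'+1) (by omega)
        rw [show j' - k' = a + 1 by omega] at i1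
        rw [ha] at i2
        rw [show j' + 1 - (k' + 1) = a + 1 by omega]
        linear_combination d0 - q ^ (a+1) * d1 + i1 - d2 + q ^ (k'+1+1) * i2

/-- absorption: [k+1] * qbinom j (k+1) = [j-k] * qbinom j k -/
lemma qbinom_absorb : ∀ j k : ℕ,
    qnum q (k + 1) * qbinom q j (k + 1) = qnum q (j - k) * qbinom q j k
  | 0, k => by
      rw [show qbinom q 0 (k+1) = 0 from rfl, show (0:ℕ) - k = 0 by omega, qnum_zero]
      ring
  | j + 1, k => by
      rcases Nat.lt_or_ge j k with h | h
      · rw [qbinom_eq_zero q (show j + 1 < k + 1 by omega), show j + 1 - k = 0 by omega,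
          qnum_zero]
        ring
      · rcases Nat.eq_zero_or_pos k with rfl | hk
        · rw [qbinom_zero_right, show j + 1 - 0 = j + 1 by omega,
            show (0:ℕ) + 1 = 1 from rfl, show qbinom q (j+1) 1 = qnum q (j+1) from qbinom_one q _,
            show qnum q 1 = 1 by simp [qnum]]
          ring
        · obtain ⟨k', rfl⟩ : ∃ k', k = k' + 1 := ⟨k - 1, by omega⟩
          have ih1 := qbinom_absorb j (k' + 1)
          have ih0 := qbinom_absorb j k'
          rw [show j - (k' + 1) = j - k' - 1 by omega] at ih1
          have h1 : qnum q (j + 1) = qnum q (k' + 2) + q ^ (k' + 2) * qnum q (j - k' - 1) := by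
            rw [← qnum_add, show k' + 2 + (j - k' - 1) = j + 1 by omega]
          have h2 : qnum q (j + 1) = qnum q (j - k') + q ^ (j - k') * qnum q (k' + 1) := by
            rw [← qnum_add, show j - k' + (k' + 1) = j + 1 by omega]
          rw [show qbinom q (j+1) (k'+1+1)
                = qbinom q j (k'+1) + q ^ (k'+1+1) * qbinom q j (k'+1+1) from rfl,
            qbinom_dual_pascal q j k' (by omega), show j + 1 - (k' + 1) = j - k' by omega]
          linear_combination q ^ (k' + 2) * ih1 + q ^ (j - k') * ih0
            - qbinom q j (k' + 1) * h1 + qbinom q j (k' + 1) * h2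

end S7

namespace S7x
open S7
variable {R : Type*} [CommRing R] (q : R)

/-- C2 j = 1 + 2 + ... + j -/
def C2 (j : ℕ) : ℕ := ∑ i ∈ Finset.Icc 1 j, i

lemma C2_succ (j : ℕ) : C2 (j + 1) = C2 j + (j + 1) := by
  unfold C2
  rw [show Finset.Icc 1 (j+1) = insert (j+1) (Finset.Icc 1 j) by
    ext x; simp [Finset.mem_Icc, Finset.mem_insert]; omega]
  rw [Finset.sum_insert (by simp [Finset.mem_Icc])]
  omega

lemma sum_le_C2 {j : ℕ} {T : Finset ℕ} (hT : T ⊆ Finset.Icc 1 j) : ∑ i ∈ T, i ≤ C2 j :=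
  Finset.sum_le_sum_of_subset hT

/-- h2 j k = Σ over k-subsets T of [1..j] of q^(C2 j - Σ T) -/
def h2 (j k : ℕ) : R := ∑ T ∈ (Finset.Icc 1 j).powersetCard k, q ^ (C2 j - ∑ i ∈ T, i)

lemma h2_zero_zero : h2 q 0 0 = 1 := by
  simp [h2, C2]

lemma h2_eq_zero {j k : ℕ} (h : j < k) : h2 q j k = 0 := by
  unfold h2
  rw [Finset.powersetCard_eq_empty.mpr (by rw [Nat.card_Icc]; omega), Finset.sum_empty]

lemma h2_zero_right (j : ℕ) : h2 q j 0 = q ^ (C2 j) := by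
  simp [h2]

lemma h2_succ_succ (j k : ℕ) : h2 q (j + 1) (k + 1) = h2 q j k + q ^ (j + 1) * h2 q j (k + 1) := by
  unfold h2
  have hins : Finset.Icc 1 (j+1) = insert (j+1) (Finset.Icc 1 j) := by
    ext x; simp only [Finset.mem_Icc, Finset.mem_insert]; omega
  have hnm : (j+1) ∉ Finset.Icc 1 j := by simp [Finset.mem_Icc]
  have hdisj : Disjoint (Finset.powersetCard (k+1) (Finset.Icc 1 j))
      ((Finset.powersetCard k (Finset.Icc 1 j)).image (insert (j+1))) := by
    rw [Finset.disjoint_left]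
    intro T hT hT'
    rw [Finset.mem_powersetCard] at hT
    rw [Finset.mem_image] at hT'
    obtain ⟨U, hU, rfl⟩ := hT'
    exact hnm (hT.1 (Finset.mem_insert_self _ _))
  rw [hins, Finset.powersetCard_succ_insert hnm, Finset.sum_union hdisj]
  rw [Finset.sum_image (by
    intro T hT U hU hTU
    rw [Finset.mem_coe, Finset.mem_powersetCard] at hT hU
    have key : ∀ V : Finset ℕ, V ⊆ Finset.Icc 1 j → (insert (j+1) V).erase (j+1) = V := by
      intro V hV
      rw [Finset.erase_insert (fun hc => hnm (hV hc))]
    rw [← key T hT.1, ← key U hU.1, hTU])]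
  rw [add_comm]
  congr 1
  · -- image part: T with j+1 inserted ↦ h2 j k
    apply Finset.sum_congr rfl
    intro T hT
    rw [Finset.mem_powersetCard] at hT
    rw [Finset.sum_insert (fun hc => hnm (hT.1 hc))]
    rw [show C2 (j+1) - (j + 1 + ∑ i ∈ T, i) = C2 j - ∑ i ∈ T, i by
      have := sum_le_C2 hT.1; rw [C2_succ]; omega]
  · -- other part
    rw [Finset.mul_sum]
    apply Finset.sum_congr rfl
    intro T hT
    rw [Finset.mem_powersetCard] at hT
    rw [← pow_add, show j + 1 + (C2 j - ∑ i ∈ T, i) = C2 (j+1) - ∑ i ∈ T, i by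
      have := sum_le_C2 hT.1; rw [C2_succ]; omega]

lemma h2_self : ∀ j : ℕ, h2 q j j = 1
  | 0 => h2_zero_zero q
  | j + 1 => by rw [h2_succ_succ, h2_self j, h2_eq_zero q (by omega)]; ring

/-- closed form -/
lemma h2_eq : ∀ j k : ℕ, h2 q j k = q ^ (C2 (j - k)) * qbinom q j k
  | j, 0 => by rw [h2_zero_right, qbinom_zero_right, show j - 0 = j by omega]; ring
  | 0, k + 1 => by
      rw [h2_eq_zero q (by omega), show qbinom q 0 (k+1) = 0 from rfl]; ring
  | j + 1, k + 1 => by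
      rw [h2_succ_succ, h2_eq j k, h2_eq j (k+1),
        show qbinom q (j+1) (k+1) = qbinom q j k + q ^ (k+1) * qbinom q j (k+1) from rfl]
      rcases Nat.lt_or_ge j (k+1) with h | h
      · rw [qbinom_eq_zero q h, show j + 1 - (k+1) = j - k by omega]
        ring
      · obtain ⟨b, hb⟩ : ∃ b, j - (k+1) = b := ⟨_, rfl⟩
        rw [hb, show j - k = b + 1 by omega, show j + 1 - (k+1) = b + 1 by omega,
          C2_succ, show j + 1 = (k+1) + (b+1) by omega]
        ring

/-- identity (i) -/
lemma idty_i (j k : ℕ) :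
    h2 q (j + 1) k = q ^ (j + 1 - k) * (h2 q j k + if k = 0 then 0 else h2 q j (k - 1)) := by
  rcases Nat.eq_zero_or_pos k with rfl | hk
  · rw [h2_zero_right, h2_zero_right, C2_succ, if_pos rfl, show j + 1 - 0 = j + 1 by omega]
    ring
  obtain ⟨k', rfl⟩ : ∃ k', k = k' + 1 := ⟨k - 1, by omega⟩
  rw [if_neg (by omega), show k' + 1 - 1 = k' by omega]
  rcases Nat.lt_or_ge j k' with h | h
  · -- k' > j : k = k'+1 > j+1, everything zero
    rw [h2_eq_zero q (show j + 1 < k' + 1 by omega), h2_eq_zero q (show j < k' + 1 by omega),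
      h2_eq_zero q h]
    ring
  rcases Nat.eq_or_lt_of_le h with rfl | h'
  · -- k = j+1
    rw [h2_self, h2_eq_zero q (by omega), h2_self, show k' + 1 - (k' + 1) = 0 by omega]
    ring
  · -- k'+1 ≤ j
    obtain ⟨c, hc⟩ : ∃ c, j - (k' + 1) = c := ⟨_, rfl⟩
    rw [h2_eq, h2_eq, h2_eq, qbinom_dual_pascal q j k' (by omega)]
    rw [hc, show j + 1 - (k' + 1) = c + 1 by omega, show j - k' = c + 1 by omega, C2_succ]
    ring

/-- identity (ii) -/
lemma idty_ii (j k : ℕ) :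
    h2 q j k * qnum q (j + 1)
      = qnum q (j + 1 - k) * (h2 q j k + if k = 0 then 0 else h2 q j (k - 1)) := by
  rcases Nat.eq_zero_or_pos k with rfl | hk
  · rw [if_pos rfl, show j + 1 - 0 = j + 1 by omega]; ring
  obtain ⟨k', rfl⟩ : ∃ k', k = k' + 1 := ⟨k - 1, by omega⟩
  rw [if_neg (by omega), show k' + 1 - 1 = k' by omega]
  rcases Nat.lt_or_ge j (k' + 1) with h | h
  · rw [h2_eq_zero q h, show j + 1 - (k' + 1) = 0 by omega, qnum_zero]
    ring
  · obtain ⟨c, hc⟩ : ∃ c, j - (k' + 1) = c := ⟨_, rfl⟩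
    have habs := qbinom_absorb q j k'
    have hadd : qnum q (j + 1) = qnum q (j - k') + q ^ (j - k') * qnum q (k' + 1) := by
      rw [← qnum_add, show j - k' + (k' + 1) = j + 1 by omega]
    have hjk : j - k' = c + 1 := by omega
    have hj1 : j + 1 - (k' + 1) = c + 1 := by omega
    rw [hjk] at habs hadd
    rw [h2_eq q j (k' + 1), h2_eq q j k', hc, hjk, hj1, C2_succ]
    linear_combination q ^ (C2 c) * q ^ (c + 1) * habs
      + q ^ (C2 c) * qbinom q j (k' + 1) * hadd

/-- the key combined identity -/
lemma key_identity (n j k : ℕ) (hj : j + 1 ≤ n) :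
    h2 q j k * qnum q (j + 1) + h2 q (j + 1) k * qnum q (n - j)
      = qnum q (n + 1 - k) * (h2 q j k + if k = 0 then 0 else h2 q j (k - 1)) := by
  rcases Nat.lt_or_ge (j + 1) k with h | h
  · -- k > j+1: all h2 vanish
    rw [h2_eq_zero q (show j < k by omega), h2_eq_zero q h,
      h2_eq_zero q (show j < k - 1 by omega), if_neg (show k ≠ 0 by omega)]
    ring
  · rw [idty_i, idty_ii]
    have : qnum q (n + 1 - k) = qnum q (j + 1 - k) + q ^ (j + 1 - k) * qnum q (n - j) := by
      rw [← qnum_add, show j + 1 - k + (n - j) = n + 1 - k by omega]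
    rw [this]
    ring

/-- number of elements of D that are ≥ i -/
def cge (D : Finset ℕ) (i : ℕ) : ℕ := (D.filter (fun d => i ≤ d)).card

lemma cge_insert_min {a : ℕ} {s : Finset ℕ} (hmin : ∀ x ∈ s, a < x) {i : ℕ} (hi : i ∈ s) :
    cge (insert a s) i = cge s i := by
  unfold cge
  rw [Finset.filter_insert, if_neg (by have := hmin i hi; omega)]

lemma cge_self_insert_min {a : ℕ} {s : Finset ℕ} (hmin : ∀ x ∈ s, a < x) (ha : a ∉ s) :
    cge (insert a s) a = s.card + 1 := by
  unfold cge
  rw [Finset.filter_insert, if_pos (le_refl a), Finset.filter_true_of_mem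
    (fun x hx => (hmin x hx).le), Finset.card_insert_of_notMem ha]

lemma sum_cge (D : Finset ℕ) : ∑ i ∈ D, cge D i = C2 D.card := by
  induction D using Finset.induction_on_min with
  | empty => simp [C2]
  | insert a s hmin ih =>
      have ha : a ∉ s := fun hc => absurd (hmin a hc) (lt_irrefl a)
      rw [Finset.sum_insert ha, cge_self_insert_min hmin ha,
        Finset.sum_congr rfl (fun i hi => cge_insert_min hmin hi), ih,
        Finset.card_insert_of_notMem ha, C2_succ]
      omega

lemma C2_card_le_sum (D : Finset ℕ) (hD : ∀ x ∈ D, 1 ≤ x) : C2 D.card ≤ ∑ i ∈ D, i := by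
  induction D using Finset.induction_on_max with
  | empty => simp [C2]
  | insert a s hmax ih =>
      have ha : a ∉ s := fun hc => absurd (hmax a hc) (lt_irrefl a)
      have hsub : s ⊆ Finset.Icc 1 (a - 1) := by
        intro x hx
        rw [Finset.mem_Icc]
        exact ⟨hD x (Finset.mem_insert_of_mem hx), by have := hmax x hx; omega⟩
      have hcard : s.card ≤ a - 1 := by
        have := Finset.card_le_card hsub
        rwa [Nat.card_Icc, show a - 1 + 1 - 1 = a - 1 by omega] at this
      have ha1 : 1 ≤ a := hD a (Finset.mem_insert_self _ _)
      rw [Finset.sum_insert ha, Finset.card_insert_of_notMem ha, C2_succ]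
      have := ih (fun x hx => hD x (Finset.mem_insert_of_mem hx))
      omega

/-- Lemma G': the weighted sum over k-subsets only depends on the cardinality -/
lemma lemmaG' (D : Finset ℕ) : ∀ k : ℕ,
    ∑ S ∈ D.powersetCard k, q ^ (∑ i ∈ D \ S, cge D i) = h2 q D.card k := by
  induction D using Finset.induction_on_min with
  | empty =>
      intro k
      cases k with
      | zero => simp [h2_zero_zero]
      | succ k =>
          rw [h2_eq_zero q (by simp), Finset.powersetCard_eq_empty.mpr (by simp),
            Finset.sum_empty]
  | insert a s hmin ih =>
      intro k
      have ha : a ∉ s := fun hc => absurd (hmin a hc) (lt_irrefl a)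
      rw [Finset.card_insert_of_notMem ha]
      cases k with
      | zero =>
          rw [Finset.powersetCard_zero, Finset.sum_singleton, Finset.sdiff_empty,
            sum_cge (insert a s), Finset.card_insert_of_notMem ha, h2_zero_right]
      | succ k =>
          have hdisj : Disjoint (Finset.powersetCard (k+1) s)
              ((Finset.powersetCard k s).image (insert a)) := by
            rw [Finset.disjoint_left]
            intro T hT hT'
            rw [Finset.mem_powersetCard] at hT
            rw [Finset.mem_image] at hT'
            obtain ⟨U, hU, rfl⟩ := hT'
            exact ha (hT.1 (Finset.mem_insert_self _ _))
          rw [Finset.powersetCard_succ_insert ha, Finset.sum_union hdisj, h2_succ_succ,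
            add_comm (h2 q s.card k)]
          congr 1
          · -- S ∌ a part
            rw [← ih (k+1), Finset.mul_sum]
            apply Finset.sum_congr rfl
            intro S hS
            rw [Finset.mem_powersetCard] at hS
            have haS : a ∉ S := fun hc => ha (hS.1 hc)
            have h1 : insert a s \ S = insert a (s \ S) := by
              ext x
              simp only [Finset.mem_sdiff, Finset.mem_insert]
              constructor
              · rintro ⟨h2 | h2, h3⟩
                · exact Or.inl h2
                · exact Or.inr ⟨h2, h3⟩
              · rintro (rfl | ⟨h2, h3⟩)
                · exact ⟨Or.inl rfl, haS⟩
                · exact ⟨Or.inr h2, h3⟩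
            have h2 : a ∉ s \ S := fun hc => ha (Finset.mem_sdiff.mp hc).1
            rw [h1, Finset.sum_insert h2, cge_self_insert_min hmin ha,
              Finset.sum_congr rfl (fun i hi =>
                cge_insert_min hmin (Finset.mem_sdiff.mp hi).1),
              pow_add]
          · -- S ∋ a part
            rw [← ih k, Finset.sum_image (by
              intro T hT U hU hTU
              rw [Finset.mem_coe, Finset.mem_powersetCard] at hT hU
              have key : ∀ V : Finset ℕ, V ⊆ s → (insert a V).erase a = V := by
                intro V hV
                rw [Finset.erase_insert (fun hc => ha (hV hc))]
              rw [← key T hT.1, ← key U hU.1, hTU])]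
            apply Finset.sum_congr rfl
            intro S hS
            rw [Finset.mem_powersetCard] at hS
            have h1 : insert a s \ insert a S = s \ S := by
              ext x
              simp only [Finset.mem_sdiff, Finset.mem_insert, not_or]
              constructor
              · rintro ⟨h2 | h2, h3, h4⟩
                · exact absurd h2 h3
                · exact ⟨h2, h4⟩
              · rintro ⟨h2, h3⟩
                exact ⟨Or.inr h2, fun hc => ha (hc ▸ h2), h3⟩
            rw [h1, Finset.sum_congr rfl (fun i hi =>
              cge_insert_min hmin (Finset.mem_sdiff.mp hi).1)]

/-- counting lemma, < version -/
lemma count_lt (E : Finset ℕ) (g : ℕ → R) :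
    ∑ e ∈ E, g ((E.filter (fun x => x < e)).card) = ∑ i ∈ Finset.range E.card, g i := by
  induction E using Finset.induction_on_max with
  | empty => simp
  | insert a s hmax ih =>
      have ha : a ∉ s := fun hc => absurd (hmax a hc) (lt_irrefl a)
      rw [Finset.sum_insert ha, Finset.card_insert_of_notMem ha, Finset.sum_range_succ,
        add_comm (∑ i ∈ Finset.range s.card, g i)]
      congr 1
      · congr 1
        rw [Finset.filter_insert, if_neg (lt_irrefl a),
          Finset.filter_true_of_mem (fun x hx => hmax x hx)]
      · rw [← ih]
        apply Finset.sum_congr rfl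
        intro e he
        congr 2
        rw [Finset.filter_insert, if_neg (by have := hmax e he; omega)]

/-- counting lemma, > version -/
lemma count_gt (D : Finset ℕ) (g : ℕ → R) :
    ∑ d ∈ D, g ((D.filter (fun x => d < x)).card) = ∑ i ∈ Finset.range D.card, g i := by
  induction D using Finset.induction_on_min with
  | empty => simp
  | insert a s hmin ih =>
      have ha : a ∉ s := fun hc => absurd (hmin a hc) (lt_irrefl a)
      rw [Finset.sum_insert ha, Finset.card_insert_of_notMem ha, Finset.sum_range_succ,
        add_comm (∑ i ∈ Finset.range s.card, g i)]
      congr 1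
      · congr 1
        rw [Finset.filter_insert, if_neg (lt_irrefl a),
          Finset.filter_true_of_mem (fun x hx => hmin x hx)]
      · rw [← ih]
        apply Finset.sum_congr rfl
        intro e he
        congr 2
        rw [Finset.filter_insert, if_neg (by have := hmin e he; omega)]

-- ============ permutation part ============
namespace S7p
open S7 S7x

variable {n : ℕ}

/-- insertion of the largest value n+1 at position p (0-indexed) -/
def ins (τ : Equiv.Perm (Fin n)) (p : Fin (n + 1)) : Equiv.Perm (Fin (n + 1)) :=
  (finSuccEquiv' p).trans ((Equiv.optionCongr τ).trans (finSuccEquiv' (Fin.last n)).symm)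

lemma ins_apply_self (τ : Equiv.Perm (Fin n)) (p : Fin (n + 1)) : ins τ p p = Fin.last n := by
  simp [ins]

lemma ins_apply_succAbove (τ : Equiv.Perm (Fin n)) (p : Fin (n + 1)) (j : Fin n) :
    ins τ p (p.succAbove j) = (τ j).castSucc := by
  simp [ins, finSuccEquiv'_succAbove, ← Fin.succAbove_last]

lemma oneline_le (τ : Equiv.Perm (Fin n)) (i : ℕ) : oneline τ i ≤ n := by
  unfold oneline
  split
  · exact (τ _).isLt
  · omega

lemma oneline_pos (τ : Equiv.Perm (Fin n)) {i : ℕ} (h1 : 1 ≤ i) (h2 : i ≤ n) :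
    1 ≤ oneline τ i := by
  unfold oneline
  rw [dif_pos ⟨h1, h2⟩]
  omega

lemma oneline_ins_lt (τ : Equiv.Perm (Fin n)) (p : Fin (n + 1)) {i : ℕ} (h1 : 1 ≤ i)
    (h2 : i ≤ (p : ℕ)) : oneline (ins τ p) i = oneline τ i := by
  have hin : i ≤ n := by have := p.isLt; omega
  have hj : i - 1 < n := by omega
  have key : (⟨i - 1, by omega⟩ : Fin (n + 1)) = p.succAbove ⟨i - 1, hj⟩ := by
    rw [Fin.succAbove_of_castSucc_lt]
    · rfl
    · rw [Fin.lt_def]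
      simp only [Fin.coe_castSucc]
      omega
  unfold oneline
  rw [dif_pos ⟨h1, by omega⟩, dif_pos ⟨h1, hin⟩, key, ins_apply_succAbove]
  rfl

lemma oneline_ins_eq (τ : Equiv.Perm (Fin n)) (p : Fin (n + 1)) :
    oneline (ins τ p) ((p : ℕ) + 1) = n + 1 := by
  have key : (⟨(p : ℕ) + 1 - 1, by omega⟩ : Fin (n + 1)) = p := by
    apply Fin.ext; simp
  unfold oneline
  rw [dif_pos ⟨by omega, by have := p.isLt; omega⟩, key, ins_apply_self]
  simp [Fin.last]

lemma oneline_ins_gt (τ : Equiv.Perm (Fin n)) (p : Fin (n + 1)) {i : ℕ}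
    (h1 : (p : ℕ) + 2 ≤ i) (h2 : i ≤ n + 1) : oneline (ins τ p) i = oneline τ (i - 1) := by
  have hj : i - 2 < n := by omega
  have key : (⟨i - 1, by omega⟩ : Fin (n + 1)) = p.succAbove ⟨i - 2, hj⟩ := by
    rw [Fin.succAbove_of_le_castSucc]
    · apply Fin.ext; simp [Fin.succ]; omega
    · rw [Fin.le_def]
      simp only [Fin.coe_castSucc]
      omega
  unfold oneline
  rw [dif_pos ⟨by omega, h2⟩, dif_pos ⟨by omega, by omega⟩, key, ins_apply_succAbove]
  have : i - 1 - 1 = i - 2 := by omega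
  simp [this]

lemma ins_bijective :
    Function.Bijective (fun x : Equiv.Perm (Fin n) × Fin (n + 1) => ins x.1 x.2) := by
  rw [Fintype.bijective_iff_injective_and_card]
  constructor
  · rintro ⟨τ, p⟩ ⟨τ', p'⟩ h
    simp only at h
    have hp : p = p' := by
      by_contra hne
      obtain ⟨z, hz⟩ := Fin.exists_succAbove_eq hne
      have h1 : ins τ p p = Fin.last n := ins_apply_self τ p
      rw [h] at h1
      rw [← hz, ins_apply_succAbove] at h1
      exact (Fin.castSucc_lt_last (τ' z)).ne h1
    subst hp
    have hτ : τ = τ' := by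
      apply Equiv.ext
      intro j
      have h1 : ins τ p (p.succAbove j) = ins τ' p (p.succAbove j) := by rw [h]
      rw [ins_apply_succAbove, ins_apply_succAbove] at h1
      exact Fin.castSucc_injective n h1
    rw [hτ]
  · simp [Fintype.card_perm, Nat.factorial_succ]
    ring

lemma mem_DesSet_iff (τ : Equiv.Perm (Fin n)) (i : ℕ) :
    i ∈ DesSet τ ↔ (1 ≤ i ∧ i ≤ n - 1) ∧ oneline τ (i + 1) < oneline τ i := by
  simp [DesSet, Finset.mem_filter, Finset.mem_Icc, and_assoc]

lemma DesSet_ins_last (τ : Equiv.Perm (Fin n)) : DesSet (ins τ (Fin.last n)) = DesSet τ := by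
  ext i
  rw [mem_DesSet_iff, mem_DesSet_iff]
  have hlv : ((Fin.last n : Fin (n + 1)) : ℕ) = n := rfl
  constructor
  · rintro ⟨⟨h1, h2⟩, h3⟩
    rcases Nat.lt_or_ge i n with h | h
    · rw [oneline_ins_lt τ _ (by omega) (by omega),
        oneline_ins_lt τ _ h1 (by omega)] at h3
      exact ⟨⟨h1, by omega⟩, h3⟩
    · exfalso
      have hi : i = n := by omega
      have h4 := oneline_ins_eq τ (Fin.last n)
      rw [hlv] at h4
      rw [hi, h4, oneline_ins_lt τ (Fin.last n) (by omega) (le_of_eq hlv.symm)] at h3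
      have := oneline_le τ n
      omega
  · rintro ⟨⟨h1, h2⟩, h3⟩
    refine ⟨⟨h1, by omega⟩, ?_⟩
    rw [oneline_ins_lt τ _ (by omega) (by omega), oneline_ins_lt τ _ h1 (by omega)]
    exact h3

lemma DesSet_ins (τ : Equiv.Perm (Fin n)) (p : Fin (n + 1)) (hp : (p : ℕ) < n) :
    DesSet (ins τ p) = ((DesSet τ).filter (fun d => d + 1 ≤ (p : ℕ)) ∪ {(p : ℕ) + 1})
      ∪ ((DesSet τ).filter (fun d => (p : ℕ) + 1 ≤ d)).image (· + 1) := by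
  have hn1 : 1 ≤ n := by omega
  ext i
  rw [mem_DesSet_iff]
  simp only [Finset.mem_union, Finset.mem_filter, Finset.mem_singleton, Finset.mem_image,
    mem_DesSet_iff]
  constructor
  · rintro ⟨⟨h1, h2⟩, h3⟩
    rw [show n + 1 - 1 = n from rfl] at h2
    rcases Nat.lt_trichotomy i ((p : ℕ)) with h | h | h
    · -- i + 1 ≤ p
      left; left
      rw [oneline_ins_lt τ _ (by omega) (by omega),
        oneline_ins_lt τ _ h1 (by omega)] at h3
      exact ⟨⟨⟨h1, by omega⟩, h3⟩, by omega⟩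
    · -- i = p : impossible (ascent into the max)
      exfalso
      rw [h, oneline_ins_eq τ p, oneline_ins_lt τ p (by omega) (by omega)] at h3
      have := oneline_le τ ((p : ℕ))
      omega
    · rcases Nat.lt_or_ge ((p : ℕ) + 1) i with h' | h'
      · -- i ≥ p + 2 : shifted descent
        right
        refine ⟨i - 1, ⟨⟨⟨by omega, by omega⟩, ?_⟩, by omega⟩, by omega⟩
        rw [oneline_ins_gt τ _ (by omega) (by omega),
          oneline_ins_gt τ _ (by omega) (by omega)] at h3
        rw [show i - 1 + 1 = i + 1 - 1 by omega]
        exact h3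
      · -- i = p + 1
        left; right; omega
  · rintro ((⟨⟨⟨h1, h2⟩, h3⟩, h4⟩ | h) | ⟨d, ⟨⟨⟨h1, h2⟩, h3⟩, h4⟩, rfl⟩)
    · refine ⟨⟨h1, by omega⟩, ?_⟩
      rw [oneline_ins_lt τ _ (by omega) (by omega), oneline_ins_lt τ _ h1 (by omega)]
      exact h3
    · subst h
      refine ⟨⟨by omega, by omega⟩, ?_⟩
      rw [oneline_ins_eq τ p, oneline_ins_gt τ _ (by omega) (by omega)]
      have := oneline_le τ ((p : ℕ) + 1 + 1 - 1)
      omega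
    · refine ⟨⟨by omega, by omega⟩, ?_⟩
      rw [oneline_ins_gt τ _ (by omega) (by omega),
        oneline_ins_gt τ _ (by omega) (by omega)]
      rw [show d + 1 - 1 = d by omega, show d + 1 + 1 - 1 = d + 1 by omega]
      exact h3

lemma DesSet_subset (τ : Equiv.Perm (Fin n)) : DesSet τ ⊆ Finset.Icc 1 (n - 1) :=
  Finset.filter_subset _ _

lemma maj_des_ins (τ : Equiv.Perm (Fin n)) (p : Fin (n + 1)) (hpn : (p : ℕ) < n) :
    (majNum (ins τ p) = (∑ d ∈ (DesSet τ).filter (fun d => d + 1 ≤ (p : ℕ)), d)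
        + ((p : ℕ) + 1)
        + ((∑ d ∈ (DesSet τ).filter (fun d => (p : ℕ) + 1 ≤ d), d)
            + ((DesSet τ).filter (fun d => (p : ℕ) + 1 ≤ d)).card)
      ∧ desNum (ins τ p) = ((DesSet τ).filter (fun d => d + 1 ≤ (p : ℕ))).card + 1
        + ((DesSet τ).filter (fun d => (p : ℕ) + 1 ≤ d)).card) := by
  have hA : ∀ d ∈ (DesSet τ).filter (fun d => d + 1 ≤ (p : ℕ)), d < (p : ℕ) + 1 := by
    intro d hd
    have := (Finset.mem_filter.mp hd).2
    omega
  have hd1 : Disjoint ((DesSet τ).filter (fun d => d + 1 ≤ (p : ℕ))) ({(p : ℕ) + 1} : Finset ℕ) := by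
    rw [Finset.disjoint_right]
    intro d hd hd'
    have := hA d hd'
    rw [Finset.mem_singleton] at hd
    omega
  have hd2 : Disjoint ((DesSet τ).filter (fun d => d + 1 ≤ (p : ℕ)) ∪ {(p : ℕ) + 1})
      (((DesSet τ).filter (fun d => (p : ℕ) + 1 ≤ d)).image (· + 1)) := by
    rw [Finset.disjoint_right]
    intro d hd hd'
    rw [Finset.mem_image] at hd
    obtain ⟨e, he, rfl⟩ := hd
    have h1 := (Finset.mem_filter.mp he).2
    rcases Finset.mem_union.mp hd' with h | h
    · have := hA _ h; omega
    · rw [Finset.mem_singleton] at h; omega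
  have hinj : ∀ a ∈ (DesSet τ).filter (fun d => (p : ℕ) + 1 ≤ d),
      ∀ b ∈ (DesSet τ).filter (fun d => (p : ℕ) + 1 ≤ d), a + 1 = b + 1 → a = b := by
    intro a _ b _ h; omega
  constructor
  · rw [majNum, DesSet_ins τ p hpn, Finset.sum_union hd2, Finset.sum_union hd1,
      Finset.sum_singleton, Finset.sum_image hinj, Finset.sum_add_distrib,
      Finset.sum_const, smul_eq_mul, mul_one]
  · rw [desNum, DesSet_ins τ p hpn, Finset.card_union_of_disjoint hd2,
      Finset.card_union_of_disjoint hd1, Finset.card_singleton,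
      Finset.card_image_of_injOn hinj]

lemma split_DesSet_mem (τ : Equiv.Perm (Fin n)) (p : Fin (n + 1)) (hpD : (p : ℕ) ∈ DesSet τ) :
    (majNum τ = (∑ d ∈ (DesSet τ).filter (fun d => d + 1 ≤ (p : ℕ)), d) + (p : ℕ)
        + (∑ d ∈ (DesSet τ).filter (fun d => (p : ℕ) + 1 ≤ d), d)
      ∧ desNum τ = ((DesSet τ).filter (fun d => d + 1 ≤ (p : ℕ))).card + 1
        + ((DesSet τ).filter (fun d => (p : ℕ) + 1 ≤ d)).card) := by
  have hsplit : DesSet τ = ((DesSet τ).filter (fun d => d + 1 ≤ (p : ℕ)) ∪ {(p : ℕ)})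
      ∪ (DesSet τ).filter (fun d => (p : ℕ) + 1 ≤ d) := by
    ext d
    simp only [Finset.mem_union, Finset.mem_filter, Finset.mem_singleton]
    constructor
    · intro hd
      rcases Nat.lt_trichotomy d ((p : ℕ)) with h | h | h
      · exact Or.inl (Or.inl ⟨hd, by omega⟩)
      · exact Or.inl (Or.inr h)
      · exact Or.inr ⟨hd, by omega⟩
    · rintro ((⟨hd, _⟩ | rfl) | ⟨hd, _⟩) <;> first | exact hd | exact hpD
  have hd1 : Disjoint ((DesSet τ).filter (fun d => d + 1 ≤ (p : ℕ))) ({(p : ℕ)} : Finset ℕ) := by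
    rw [Finset.disjoint_right]
    intro d hd hd'
    rw [Finset.mem_singleton] at hd
    have := (Finset.mem_filter.mp hd').2
    omega
  have hd2 : Disjoint ((DesSet τ).filter (fun d => d + 1 ≤ (p : ℕ)) ∪ {(p : ℕ)})
      ((DesSet τ).filter (fun d => (p : ℕ) + 1 ≤ d)) := by
    rw [Finset.disjoint_right]
    intro d hd hd'
    have h1 := (Finset.mem_filter.mp hd).2
    rcases Finset.mem_union.mp hd' with h | h
    · have := (Finset.mem_filter.mp h).2; omega
    · rw [Finset.mem_singleton] at h; omega
  constructor
  · conv_lhs => rw [majNum, hsplit]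
    rw [Finset.sum_union hd2, Finset.sum_union hd1, Finset.sum_singleton]
  · conv_lhs => rw [desNum, hsplit]
    rw [Finset.card_union_of_disjoint hd2, Finset.card_union_of_disjoint hd1,
      Finset.card_singleton]

lemma split_DesSet_not_mem (τ : Equiv.Perm (Fin n)) (p : Fin (n + 1))
    (hpD : (p : ℕ) ∉ DesSet τ) :
    (majNum τ = (∑ d ∈ (DesSet τ).filter (fun d => d + 1 ≤ (p : ℕ)), d)
        + (∑ d ∈ (DesSet τ).filter (fun d => (p : ℕ) + 1 ≤ d), d)
      ∧ desNum τ = ((DesSet τ).filter (fun d => d + 1 ≤ (p : ℕ))).card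
        + ((DesSet τ).filter (fun d => (p : ℕ) + 1 ≤ d)).card) := by
  have hsplit : DesSet τ = (DesSet τ).filter (fun d => d + 1 ≤ (p : ℕ))
      ∪ (DesSet τ).filter (fun d => (p : ℕ) + 1 ≤ d) := by
    ext d
    simp only [Finset.mem_union, Finset.mem_filter]
    constructor
    · intro hd
      rcases Nat.lt_trichotomy d ((p : ℕ)) with h | h | h
      · exact Or.inl ⟨hd, by omega⟩
      · exact absurd (h ▸ hd) hpD
      · exact Or.inr ⟨hd, by omega⟩
    · rintro (⟨hd, _⟩ | ⟨hd, _⟩) <;> exact hd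
  have hd2 : Disjoint ((DesSet τ).filter (fun d => d + 1 ≤ (p : ℕ)))
      ((DesSet τ).filter (fun d => (p : ℕ) + 1 ≤ d)) := by
    rw [Finset.disjoint_right]
    intro d hd hd'
    have h1 := (Finset.mem_filter.mp hd).2
    have h2 := (Finset.mem_filter.mp hd').2
    omega
  constructor
  · conv_lhs => rw [majNum, hsplit]
    rw [Finset.sum_union hd2]
  · conv_lhs => rw [desNum, hsplit]
    rw [Finset.card_union_of_disjoint hd2]

variable {R : Type*} [CommRing R]

lemma innersum_eq (q : R) (σ : Equiv.Perm (Fin n)) (k : ℕ) :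
    ∑ S ∈ starSets (DesSet σ) k, q ^ starMaj σ S
      = q ^ (majNum σ - C2 (desNum σ)) * h2 q (desNum σ) k := by
  have hone : ∀ x ∈ DesSet σ, 1 ≤ x := by
    intro x hx
    exact (Finset.mem_Icc.mp (DesSet_subset σ hx)).1
  have hC2m : C2 ((DesSet σ).card) ≤ majNum σ := C2_card_le_sum _ hone
  have hstar : starSets (DesSet σ) k = (DesSet σ).powersetCard k := by
    rw [starSets, Finset.powersetCard_eq_filter]
  unfold desNum
  rw [hstar, ← lemmaG' q (DesSet σ) k, Finset.mul_sum]
  apply Finset.sum_congr rfl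
  intro S hS
  rw [Finset.mem_powersetCard] at hS
  have hcap : ∀ i ∈ S, (DesSet σ ∩ Finset.Icc i (n - 1)).card = cge (DesSet σ) i := by
    intro i hi
    congr 1
    ext d
    simp only [Finset.mem_inter, Finset.mem_Icc, Finset.mem_filter, cge]
    constructor
    · rintro ⟨hd, h1, h2⟩; exact ⟨hd, h1⟩
    · rintro ⟨hd, h1⟩
      exact ⟨hd, h1, (Finset.mem_Icc.mp (DesSet_subset σ hd)).2⟩
  have hsd : (∑ i ∈ DesSet σ \ S, cge (DesSet σ) i) + ∑ i ∈ S, cge (DesSet σ) i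
      = C2 ((DesSet σ).card) := by
    rw [Finset.sum_sdiff hS.1, sum_cge]
  have hle : ∑ i ∈ S, cge (DesSet σ) i ≤ C2 ((DesSet σ).card) := by omega
  rw [starMaj, Finset.sum_congr rfl hcap, ← pow_add]
  rw [← hsd] at hC2m ⊢
  congr 1
  set A := S.sum (cge (DesSet σ)) with hA
  rw [show ∑ i ∈ S, cge (DesSet σ) i = A from rfl] at *
  omega

lemma C2_le_majNum (τ : Equiv.Perm (Fin n)) : C2 (desNum τ) ≤ majNum τ :=
  C2_card_le_sum _ (fun x hx => (Finset.mem_Icc.mp (DesSet_subset τ hx)).1)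

lemma partA (q : R) (τ : Equiv.Perm (Fin n)) (k : ℕ) :
    ∑ p ∈ Finset.univ.filter (fun p : Fin (n + 1) => (p : ℕ) ∈ DesSet τ),
        q ^ (majNum (ins τ p) - C2 (desNum (ins τ p))) * h2 q (desNum (ins τ p)) k
      = ∑ i ∈ Finset.range (desNum τ),
          q ^ (majNum τ - C2 (desNum τ)) * (h2 q (desNum τ) k * q ^ (1 + i)) := by
  have hstep : ∀ p ∈ Finset.univ.filter (fun p : Fin (n + 1) => (p : ℕ) ∈ DesSet τ),
      q ^ (majNum (ins τ p) - C2 (desNum (ins τ p))) * h2 q (desNum (ins τ p)) k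
        = (fun i => q ^ (majNum τ - C2 (desNum τ)) * (h2 q (desNum τ) k * q ^ (1 + i)))
            (((DesSet τ).filter (fun x => (p : ℕ) < x)).card) := by
    intro p hp
    have hpD : (p : ℕ) ∈ DesSet τ := (Finset.mem_filter.mp hp).2
    have hicc := Finset.mem_Icc.mp (DesSet_subset τ hpD)
    have hpn : (p : ℕ) < n := by omega
    obtain ⟨hm1, hd1⟩ := maj_des_ins τ p hpn
    obtain ⟨hm2, hd2⟩ := split_DesSet_mem τ p hpD
    have hC2 := C2_le_majNum τ
    have hfil : (DesSet τ).filter (fun d => (p : ℕ) + 1 ≤ d)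
        = (DesSet τ).filter (fun x => (p : ℕ) < x) := by
      apply Finset.filter_congr
      intro x _
      omega
    have hdes : desNum (ins τ p) = desNum τ := hd1.trans hd2.symm
    rw [hfil] at hm1 hm2
    rw [hm1, hdes]
    rw [show (∑ d ∈ (DesSet τ).filter (fun d => d + 1 ≤ (p : ℕ)), d) + ((p : ℕ) + 1)
          + ((∑ d ∈ (DesSet τ).filter (fun x => (p : ℕ) < x), d)
              + ((DesSet τ).filter (fun x => (p : ℕ) < x)).card)
          - C2 (desNum τ)
        = (majNum τ - C2 (desNum τ))
          + (1 + ((DesSet τ).filter (fun x => (p : ℕ) < x)).card) by omega]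
    rw [pow_add]
    ring
  rw [Finset.sum_congr rfl hstep,
    show Finset.range (desNum τ) = Finset.range (DesSet τ).card from rfl,
    ← count_gt (DesSet τ) (fun i => q ^ (majNum τ - C2 (desNum τ))
      * (h2 q (desNum τ) k * q ^ (1 + i)))]
  exact Finset.sum_bij' (fun (p : Fin (n + 1)) (_ : p ∈ _) => (p : ℕ))
    (fun (d : ℕ) (hd : d ∈ DesSet τ) =>
      (⟨d, by have := Finset.mem_Icc.mp (DesSet_subset τ hd); omega⟩ : Fin (n + 1)))
    (fun p hp => (Finset.mem_filter.mp hp).2)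
    (fun d hd => Finset.mem_filter.mpr ⟨Finset.mem_univ _, hd⟩)
    (fun p hp => Fin.ext rfl)
    (fun d hd => rfl)
    (fun p hp => rfl)

lemma majNum_ins_last (τ : Equiv.Perm (Fin n)) : majNum (ins τ (Fin.last n)) = majNum τ := by
  unfold majNum
  rw [DesSet_ins_last]

lemma desNum_ins_last (τ : Equiv.Perm (Fin n)) : desNum (ins τ (Fin.last n)) = desNum τ := by
  unfold desNum
  rw [DesSet_ins_last]

lemma partB (q : R) (τ : Equiv.Perm (Fin n)) (hn : 1 ≤ n) (k : ℕ) :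
    ∑ p ∈ Finset.univ.filter (fun p : Fin (n + 1) => ¬ (p : ℕ) ∈ DesSet τ),
        q ^ (majNum (ins τ p) - C2 (desNum (ins τ p))) * h2 q (desNum (ins τ p)) k
      = q ^ (majNum τ - C2 (desNum τ)) * h2 q (desNum τ) k
        + ∑ i ∈ Finset.range (n - desNum τ),
            q ^ (majNum τ - C2 (desNum τ)) * (h2 q (desNum τ + 1) k * q ^ i) := by
  have hnD : (n : ℕ) ∉ DesSet τ := by
    intro hc
    have := Finset.mem_Icc.mp (DesSet_subset τ hc)
    omega
  have hsplit : Finset.univ.filter (fun p : Fin (n + 1) => ¬ (p : ℕ) ∈ DesSet τ)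
      = insert (Fin.last n)
          (Finset.univ.filter (fun p : Fin (n + 1) => ¬ (p : ℕ) ∈ DesSet τ ∧ (p : ℕ) < n)) := by
    ext p
    simp only [Finset.mem_filter, Finset.mem_univ, true_and, Finset.mem_insert]
    constructor
    · intro hp
      rcases Nat.lt_or_ge ((p : ℕ)) n with h | h
      · exact Or.inr ⟨hp, h⟩
      · left
        apply Fin.ext
        have := p.isLt
        simp only [Fin.val_last]
        omega
    · rintro (rfl | ⟨hp, _⟩)
      · exact hnD
      · exact hp
  have hlast_not : (Fin.last n) ∉ Finset.univ.filter
      (fun p : Fin (n + 1) => ¬ (p : ℕ) ∈ DesSet τ ∧ (p : ℕ) < n) := by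
    simp only [Finset.mem_filter, Finset.mem_univ, true_and, Fin.val_last]
    omega
  rw [hsplit, Finset.sum_insert hlast_not, majNum_ins_last, desNum_ins_last]
  congr 1
  -- main part
  have hstep : ∀ p ∈ Finset.univ.filter
      (fun p : Fin (n + 1) => ¬ (p : ℕ) ∈ DesSet τ ∧ (p : ℕ) < n),
      q ^ (majNum (ins τ p) - C2 (desNum (ins τ p))) * h2 q (desNum (ins τ p)) k
        = (fun i => q ^ (majNum τ - C2 (desNum τ)) * (h2 q (desNum τ + 1) k * q ^ i))
            ((((Finset.range n).filter (fun e => ¬ e ∈ DesSet τ)).filter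
              (fun x => x < (p : ℕ))).card) := by
    intro p hp
    obtain ⟨hpD, hpn⟩ := (Finset.mem_filter.mp hp).2
    obtain ⟨hm1, hd1⟩ := maj_des_ins τ p hpn
    obtain ⟨hm2, hd2⟩ := split_DesSet_not_mem τ p hpD
    have hC2 := C2_le_majNum τ
    have hfil : (DesSet τ).filter (fun d => (p : ℕ) + 1 ≤ d)
        = (DesSet τ).filter (fun x => (p : ℕ) < x) :=
      Finset.filter_congr (fun x _ => by omega)
    have hdes : desNum (ins τ p) = desNum τ + 1 := by omega
    have hkey : (((Finset.range n).filter (fun e => ¬ e ∈ DesSet τ)).filter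
        (fun x => x < (p : ℕ)))
        = (Finset.range (p : ℕ)).filter (fun x => ¬ x ∈ DesSet τ) := by
      ext x
      simp only [Finset.mem_filter, Finset.mem_range]
      constructor
      · rintro ⟨⟨_, h2⟩, h3⟩; exact ⟨h3, h2⟩
      · rintro ⟨h1, h2⟩; exact ⟨⟨by omega, h2⟩, h1⟩
    have hkey2 : (DesSet τ).filter (fun x => x + 1 ≤ (p : ℕ))
        = (Finset.range (p : ℕ)).filter (fun x => x ∈ DesSet τ) := by
      ext x
      simp only [Finset.mem_filter, Finset.mem_range]
      constructor
      · rintro ⟨h1, h2⟩; exact ⟨by omega, h1⟩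
      · rintro ⟨h1, h2⟩; exact ⟨h2, by omega⟩
    have hcnt := Finset.card_filter_add_card_filter_not
      (s := Finset.range (p : ℕ)) (fun x => x ∈ DesSet τ)
    rw [← hkey2] at hcnt
    rw [Finset.card_range] at hcnt
    rw [hfil] at hm1 hm2 hd2
    rw [hm1, hdes, hkey, C2_succ]
    rw [show (∑ d ∈ (DesSet τ).filter (fun d => d + 1 ≤ (p : ℕ)), d) + ((p : ℕ) + 1)
          + ((∑ d ∈ (DesSet τ).filter (fun x => (p : ℕ) < x), d)
              + ((DesSet τ).filter (fun x => (p : ℕ) < x)).card)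
          - (C2 (desNum τ) + (desNum τ + 1))
        = (majNum τ - C2 (desNum τ))
          + ((Finset.range (p : ℕ)).filter (fun x => ¬ x ∈ DesSet τ)).card by omega]
    rw [pow_add]
    ring
  rw [Finset.sum_congr rfl hstep]
  have hcard : n - desNum τ = ((Finset.range n).filter (fun e => ¬ e ∈ DesSet τ)).card := by
    have h1 := Finset.card_filter_add_card_filter_not
      (s := Finset.range n) (fun x => x ∈ DesSet τ)
    have h2 : (Finset.range n).filter (fun x => x ∈ DesSet τ) = DesSet τ := by
      ext x
      simp only [Finset.mem_filter, Finset.mem_range]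
      constructor
      · rintro ⟨_, h⟩; exact h
      · intro h
        have := Finset.mem_Icc.mp (DesSet_subset τ h)
        exact ⟨by omega, h⟩
    rw [h2, Finset.card_range] at h1
    unfold desNum
    omega
  rw [hcard, ← count_lt ((Finset.range n).filter (fun e => ¬ e ∈ DesSet τ))
    (fun i => q ^ (majNum τ - C2 (desNum τ)) * (h2 q (desNum τ + 1) k * q ^ i))]
  exact Finset.sum_bij' (fun (p : Fin (n + 1)) (_ : p ∈ _) => (p : ℕ))
    (fun (e : ℕ) (he : e ∈ (Finset.range n).filter (fun e => ¬ e ∈ DesSet τ)) =>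
      (⟨e, by have := (Finset.mem_filter.mp he).1; rw [Finset.mem_range] at this; omega⟩
        : Fin (n + 1)))
    (fun p hp => by
      obtain ⟨hpD, hpn⟩ := (Finset.mem_filter.mp hp).2
      exact Finset.mem_filter.mpr ⟨Finset.mem_range.mpr hpn, hpD⟩)
    (fun e he => by
      obtain ⟨h1, h2⟩ := Finset.mem_filter.mp he
      rw [Finset.mem_range] at h1
      exact Finset.mem_filter.mpr ⟨Finset.mem_univ _, h2, h1⟩)
    (fun p hp => Fin.ext rfl)
    (fun e he => rfl)
    (fun p hp => rfl)

lemma one_add_sum_pow (q : R) (m : ℕ) :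
    1 + ∑ i ∈ Finset.range m, q ^ (1 + i) = qnum q (m + 1) := by
  rw [show m + 1 = 1 + m by omega, qnum_add]
  unfold qnum
  rw [Finset.mul_sum]
  congr 1
  · simp
  · apply Finset.sum_congr rfl
    intros i _
    rw [pow_add, pow_one]

lemma desNum_le (τ : Equiv.Perm (Fin n)) : desNum τ ≤ n - 1 := by
  have := Finset.card_le_card (DesSet_subset τ)
  rwa [Nat.card_Icc, show n - 1 + 1 - 1 = n - 1 by omega] at this

lemma per_tau (q : R) (τ : Equiv.Perm (Fin n)) (hn : 1 ≤ n) (k : ℕ) :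
    ∑ p : Fin (n + 1),
        q ^ (majNum (ins τ p) - C2 (desNum (ins τ p))) * h2 q (desNum (ins τ p)) k
      = qnum q (n + 1 - k) * ((q ^ (majNum τ - C2 (desNum τ)) * h2 q (desNum τ) k)
          + (if k = 0 then 0
              else q ^ (majNum τ - C2 (desNum τ)) * h2 q (desNum τ) (k - 1))) := by
  have hj : desNum τ + 1 ≤ n := by have := desNum_le τ; omega
  rw [← Finset.sum_filter_add_sum_filter_not Finset.univ
    (fun p : Fin (n + 1) => (p : ℕ) ∈ DesSet τ), partA, partB q τ hn]
  rw [← Finset.mul_sum, ← Finset.mul_sum, ← Finset.mul_sum, ← Finset.mul_sum]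
  have hq1 := one_add_sum_pow q (desNum τ)
  have hq2 : ∑ i ∈ Finset.range (n - desNum τ), q ^ i = qnum q (n - desNum τ) := rfl
  have hkey := key_identity q n (desNum τ) k hj
  by_cases hk : k = 0
  · rw [if_pos hk] at hkey ⊢
    linear_combination (q ^ (majNum τ - C2 (desNum τ))) * hkey
      + (q ^ (majNum τ - C2 (desNum τ))) * (h2 q (desNum τ) k) * hq1
      + (q ^ (majNum τ - C2 (desNum τ))) * (h2 q (desNum τ + 1) k) * hq2
  · rw [if_neg hk] at hkey ⊢
    linear_combination (q ^ (majNum τ - C2 (desNum τ))) * hkey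
      + (q ^ (majNum τ - C2 (desNum τ))) * (h2 q (desNum τ) k) * hq1
      + (q ^ (majNum τ - C2 (desNum τ))) * (h2 q (desNum τ + 1) k) * hq2

lemma Dmaj_eq_sum (q : R) (k : ℕ) :
    Dmaj q n k = ∑ σ : Equiv.Perm (Fin n),
      q ^ (majNum σ - C2 (desNum σ)) * h2 q (desNum σ) k :=
  Finset.sum_congr rfl (fun σ _ => innersum_eq q σ k)

lemma oneline_revPerm {i : ℕ} (h1 : 1 ≤ i) (h2 : i ≤ n) :
    oneline (Fin.revPerm : Equiv.Perm (Fin n)) i = n - i + 1 := by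
  unfold oneline
  rw [dif_pos ⟨h1, h2⟩]
  show ((⟨i - 1, by omega⟩ : Fin n).rev : ℕ) + 1 = n - i + 1
  rw [Fin.val_rev]
  simp only
  omega

lemma DesSet_revPerm : DesSet (Fin.revPerm : Equiv.Perm (Fin n)) = Finset.Icc 1 (n - 1) := by
  ext i
  rw [mem_DesSet_iff, Finset.mem_Icc]
  constructor
  · rintro ⟨h, _⟩; exact h
  · rintro ⟨h1, h2⟩
    refine ⟨⟨h1, h2⟩, ?_⟩
    rw [oneline_revPerm (by omega) (by omega), oneline_revPerm (by omega) (by omega)]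
    omega

lemma full_descent_unique (σ : Equiv.Perm (Fin n))
    (h : DesSet σ = Finset.Icc 1 (n - 1)) : σ = Fin.revPerm := by
  have hadj : ∀ i : ℕ, ∀ h1 : i + 1 < n, (σ ⟨i + 1, h1⟩ : ℕ) < σ ⟨i, by omega⟩ := by
    intro i h1
    have hm : (i + 1) ∈ DesSet σ := by
      rw [h, Finset.mem_Icc]
      omega
    rw [mem_DesSet_iff] at hm
    obtain ⟨-, hd⟩ := hm
    unfold oneline at hd
    rw [dif_pos ⟨by omega, by omega⟩, dif_pos ⟨by omega, by omega⟩] at hd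
    simp only [Nat.add_sub_cancel] at hd
    omega
  have hanti : ∀ a b : ℕ, ∀ (ha : a < n) (hb : b < n), a < b →
      (σ ⟨b, hb⟩ : ℕ) < σ ⟨a, ha⟩ := by
    intro a b ha hb hab
    induction b with
    | zero => omega
    | succ b ih =>
        rcases Nat.lt_or_ge a b with h' | h'
        · exact lt_trans (hadj b hb) (ih (by omega) h')
        · have : a = b := by omega
          subst this
          exact hadj a hb
  have hgmono : StrictMono (fun x : Fin n => σ x.rev) := by
    intro x y hxy
    have hrev : (y.rev : ℕ) < (x.rev : ℕ) := by
      rw [Fin.val_rev, Fin.val_rev]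
      have := x.isLt
      have := y.isLt
      rw [Fin.lt_def] at hxy
      omega
    have := hanti (y.rev : ℕ) (x.rev : ℕ) (y.rev.isLt) (x.rev.isLt) hrev
    simp only [Fin.eta] at this
    exact this
  have hsurj : Function.Surjective (fun x : Fin n => σ x.rev) := by
    intro y
    exact ⟨(σ.symm y).rev, by simp [Fin.rev_rev]⟩
  have heq := Subsingleton.elim (StrictMono.orderIsoOfSurjective _ hgmono hsurj)
    (OrderIso.refl (Fin n))
  have hfun : ∀ x : Fin n, σ x.rev = x := by
    intro x
    have h1 : (StrictMono.orderIsoOfSurjective _ hgmono hsurj) x = σ x.rev := rfl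
    rw [heq] at h1
    exact h1.symm.trans (by rfl)
  apply Equiv.ext
  intro x
  have := hfun x.rev
  rw [Fin.rev_rev] at this
  rw [this]
  rfl

lemma part1 (q : R) (hn : 1 ≤ n) : Dmaj q n (n - 1) = 1 := by
  rw [Dmaj_eq_sum]
  have hterm : ∀ σ : Equiv.Perm (Fin n),
      q ^ (majNum σ - C2 (desNum σ)) * h2 q (desNum σ) (n - 1)
        = if σ = Fin.revPerm then 1 else 0 := by
    intro σ
    by_cases hσ : σ = Fin.revPerm
    · subst hσ
      rw [if_pos rfl]
      have hdes : desNum (Fin.revPerm : Equiv.Perm (Fin n)) = n - 1 := by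
        unfold desNum
        rw [DesSet_revPerm, Nat.card_Icc]
        omega
      have hmaj : majNum (Fin.revPerm : Equiv.Perm (Fin n)) = C2 (n - 1) := by
        unfold majNum
        rw [DesSet_revPerm]
        rfl
      rw [hdes, hmaj, h2_self, Nat.sub_self, pow_zero, one_mul]
    · rw [if_neg hσ]
      have hlt : desNum σ < n - 1 := by
        rcases Nat.lt_or_ge (desNum σ) (n - 1) with h | h
        · exact h
        · exfalso
          apply hσ
          apply full_descent_unique
          apply Finset.eq_of_subset_of_card_le (DesSet_subset σ)
          rw [Nat.card_Icc, show n - 1 + 1 - 1 = n - 1 by omega]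
          exact h
      rw [h2_eq_zero q hlt, mul_zero]
  rw [Finset.sum_congr rfl (fun σ _ => hterm σ)]
  simp

lemma part2 (q : R) (m k : ℕ) (hm : 1 ≤ m) :
    Dmaj q (m + 1) k
      = qnum q (m + 1 - k) * (Dmaj q m k + if k = 0 then 0 else Dmaj q m (k - 1)) := by
  have hbij := Fintype.sum_bijective _ (ins_bijective (n := m))
    (fun x : Equiv.Perm (Fin m) × Fin (m + 1) =>
      q ^ (majNum (ins x.1 x.2) - C2 (desNum (ins x.1 x.2))) * h2 q (desNum (ins x.1 x.2)) k)
    (fun σ => q ^ (majNum σ - C2 (desNum σ)) * h2 q (desNum σ) k)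
    (fun x => rfl)
  rw [Dmaj_eq_sum q k, ← hbij, Fintype.sum_prod_type]
  rw [Finset.sum_congr rfl (fun τ _ => per_tau q τ hm k), ← Finset.mul_sum,
    Finset.sum_add_distrib, ← Dmaj_eq_sum]
  by_cases hk : k = 0
  · subst hk
    simp
  · simp only [if_neg hk, ← Dmaj_eq_sum]

end S7p

end S7x


/-- D^{maj}_{n,n−1}(q) = 1 for n ≥ 1, and for all n ≥ 2 and 0 ≤ k ≤ n−2,
D^{maj}_{n,k}(q) = [n−k]_q · D^{maj}_{n−1,k}(q) + [n−k]_q · D^{maj}_{n−1,k−1}(q),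
with the convention D^{maj}_{n,−1}(q) = 0. -/
theorem statement7 {R : Type*} [CommRing R] (q : R) :
    (∀ n : ℕ, 1 ≤ n → Dmaj q n (n - 1) = 1) ∧
    (∀ n k : ℕ, 2 ≤ n → k ≤ n - 2 →
      Dmaj q n k =
        qnum q (n - k) * Dmaj q (n - 1) k +
          qnum q (n - k) * (if k = 0 then 0 else Dmaj q (n - 1) (k - 1))) := by
  constructor
  · intro n hn
    exact S7x.S7p.part1 q hn
  · intro n k hn _
    obtain ⟨m, rfl⟩ : ∃ m, n = m + 1 := ⟨n - 1, by omega⟩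
    rw [S7x.S7p.part2 q m k (by omega)]
    simp only [Nat.add_sub_cancel]
    rw [mul_add]
end

section
/- For all 1 ≤ k ≤ n and every element q of a commutative ring, q^{(n−k)(n−1)} · Σ_{(σ,S)∈𝔖^>_{n,n−k}} q^{maj((σ,S))} = Σ_{i=1}^{k} q^{C(n−k,2) + (n−k)(i−1)} · binom_q(n−i, n−k) · A_{n,n−i}(q), where C(m,2) = m(m−1)/2 and A_{n,j}(q) = Σ_{σ∈𝔖_n : des(σ)=j} q^{maj(σ)}. (This is the identity D^{maj}_{𝔖^>_{n,n−k}}(q) = Σ_{i=1}^{k} q^{C(n−k,2)−(n−k)(n−i)} binom_q(n−i,n−k) A_{n,n−i}(q) with denominators cleared.) -/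
open Finset

/- ========================= auxiliary lemmas ========================= -/

lemma qbinom_zero_of_lt {R : Type*} [CommRing R] (q : R) :
    ∀ m r : ℕ, m < r → qbinom q m r = 0
  | 0, _ + 1, _ => rfl
  | m + 1, r + 1, h => by
    show qbinom q m r + q ^ (r + 1) * qbinom q m (r + 1) = 0
    rw [qbinom_zero_of_lt q m r (by omega), qbinom_zero_of_lt q m (r + 1) (by omega)]
    ring

lemma insert_inj_aux {x y : Finset ℕ} {d : ℕ} (hx : d ∉ x) (hy : d ∉ y)
    (h : insert d x = insert d y) : x = y := by
  ext a
  by_cases ha : a = d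
  · subst ha; simp [hx, hy]
  · have := Finset.ext_iff.mp h a
    simp only [Finset.mem_insert, ha, false_or] at this
    exact this

/-- Key generating-function lemma: subsets of `range d` of size `m`, weighted by
`q ^ (∑ (c - t))`, give a (shifted) Gaussian binomial coefficient. -/
lemma gsum {R : Type*} [CommRing R] (q : R) (c : ℕ) :
    ∀ d : ℕ, d ≤ c + 1 → ∀ m : ℕ,
      ∑ T ∈ (Finset.range d).powersetCard m, q ^ (∑ t ∈ T, (c - t)) =
        q ^ (m * (c + 1 - d) + m.choose 2) * qbinom q d m := by
  intro d
  induction d with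
  | zero =>
    intro _ m
    cases m with
    | zero => simp [qbinom]
    | succ m =>
      rw [show (Finset.range 0).powersetCard (m + 1) = ∅ from
        Finset.powersetCard_eq_empty.mpr (by simp)]
      show (0 : R) = _ * qbinom q 0 (m + 1)
      rw [show qbinom q 0 (m + 1) = 0 from rfl]; ring
  | succ d ih =>
    intro hd m
    have hdc : d ≤ c := by omega
    obtain ⟨e, rfl⟩ : ∃ e, c = d + e := ⟨c - d, by omega⟩
    cases m with
    | zero => simp [qbinom]
    | succ m =>
      have hnm : d ∉ Finset.range d := Finset.notMem_range_self
      rw [Finset.range_add_one, Finset.powersetCard_succ_insert hnm]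
      have hdisj : Disjoint ((Finset.range d).powersetCard (m + 1))
          (((Finset.range d).powersetCard m).image (insert d)) := by
        rw [Finset.disjoint_left]
        intro T hT hT'
        obtain ⟨T'', hT'', rfl⟩ := Finset.mem_image.mp hT'
        have h2 : insert d T'' ⊆ Finset.range d := (Finset.mem_powersetCard.mp hT).1
        exact (Finset.notMem_range_self (n := d)) (h2 (Finset.mem_insert_self d T''))
      rw [Finset.sum_union hdisj]
      have himg : ∑ T ∈ ((Finset.range d).powersetCard m).image (insert d),
          q ^ (∑ t ∈ T, (d + e - t)) =
          ∑ T ∈ (Finset.range d).powersetCard m, q ^ ((d + e - d) + ∑ t ∈ T, (d + e - t)) := by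
        rw [Finset.sum_image]
        · refine Finset.sum_congr rfl fun T hT => ?_
          have hdT : d ∉ T := fun h =>
            Finset.notMem_range_self ((Finset.mem_powersetCard.mp hT).1 h)
          rw [Finset.sum_insert hdT]
        · intro x hx y hy hxy
          have hxd : d ∉ x := fun h =>
            Finset.notMem_range_self ((Finset.mem_powersetCard.mp hx).1 h)
          have hyd : d ∉ y := fun h =>
            Finset.notMem_range_self ((Finset.mem_powersetCard.mp hy).1 h)
          exact insert_inj_aux hxd hyd hxy
      rw [himg]
      have h2 : ∑ T ∈ (Finset.range d).powersetCard m,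
          q ^ ((d + e - d) + ∑ t ∈ T, (d + e - t)) =
          q ^ (d + e - d) * ∑ T ∈ (Finset.range d).powersetCard m,
            q ^ (∑ t ∈ T, (d + e - t)) := by
        rw [Finset.mul_sum]
        exact Finset.sum_congr rfl fun T _ => pow_add q _ _
      rw [h2, ih (by omega) (m + 1), ih (by omega) m]
      show _ = _ * (qbinom q d m + q ^ (m + 1) * qbinom q d (m + 1))
      have e1 : d + e + 1 - d = e + 1 := by omega
      have e2 : d + e - d = e := by omega
      have e3 : d + e + 1 - (d + 1) = e := by omega
      have e4 : (m + 1).choose 2 = m.choose 2 + m := by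
        rw [Nat.choose_succ_succ, Nat.choose_one_right, Nat.add_comm]
      rw [e1, e2, e3, e4]
      ring

lemma desSet_subset {n : ℕ} (σ : Equiv.Perm (Fin n)) : DesSet σ ⊆ Finset.Icc 1 (n - 1) :=
  Finset.filter_subset _ _

lemma desNum_le {n : ℕ} (σ : Equiv.Perm (Fin n)) : desNum σ ≤ n - 1 := by
  have := Finset.card_le_card (desSet_subset σ)
  simpa [desNum, Nat.card_Icc] using this

lemma starSets_eq (D : Finset ℕ) (m : ℕ) : starSets D m = D.powersetCard m :=
  Finset.powersetCard_eq_filter.symm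

/-- The per-permutation computation. -/
lemma innerSumAux {R : Type*} [CommRing R] (q : R) {n : ℕ} (hn : 1 ≤ n)
    (σ : Equiv.Perm (Fin n)) (m : ℕ) (hm : m ≤ n - 1) :
    q ^ (m * (n - 1)) * ∑ S ∈ starSets (DesSet σ) m, q ^ starMaj σ S =
      q ^ (m * (n - 1 - desNum σ) + m.choose 2 + majNum σ) * qbinom q (desNum σ) m := by
  set D := DesSet σ with hD
  set d := desNum σ with hd
  have hdcard : D.card = d := rfl
  set cnt : ℕ → ℕ := fun i => (D ∩ Finset.Icc i (n - 1)).card with hcnt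
  have hDmem : ∀ i ∈ D, 1 ≤ i ∧ i ≤ n - 1 := fun i hi =>
    Finset.mem_Icc.mp (desSet_subset σ hi)
  have h1 : ∀ i ∈ D, 1 ≤ cnt i := fun i hi =>
    Finset.card_pos.mpr ⟨i, Finset.mem_inter.mpr ⟨hi,
      Finset.mem_Icc.mpr ⟨le_refl i, (hDmem i hi).2⟩⟩⟩
  have h2 : ∀ i ∈ D, cnt i ≤ d := fun i _ => by
    rw [← hdcard]; exact Finset.card_le_card Finset.inter_subset_left
  have h3 : ∀ i ∈ D, ∀ j ∈ D, i < j → cnt j < cnt i := by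
    intro i hi j hj hij
    apply Finset.card_lt_card
    refine (Finset.ssubset_iff_of_subset
      (Finset.inter_subset_inter (le_refl D) (Finset.Icc_subset_Icc (by omega) le_rfl))).mpr ?_
    refine ⟨i, Finset.mem_inter.mpr ⟨hi,
      Finset.mem_Icc.mpr ⟨le_refl i, (hDmem i hi).2⟩⟩, ?_⟩
    intro hcon
    have := (Finset.mem_Icc.mp (Finset.mem_inter.mp hcon).2).1
    omega
  have hcntinj : ∀ i ∈ D, ∀ j ∈ D, cnt i = cnt j → i = j := by
    intro i hi j hj h
    rcases lt_trichotomy i j with h' | h' | h'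
    · have := h3 i hi j hj h'; omega
    · exact h'
    · have := h3 j hj i hi h'; omega
  set w : ℕ → ℕ := fun i => cnt i - 1 with hw
  have hwinj : ∀ i ∈ D, ∀ j ∈ D, w i = w j → i = j := by
    intro i hi j hj h
    have := h1 i hi; have := h1 j hj
    exact hcntinj i hi j hj (by simp only [hw] at h; omega)
  have hwlt : ∀ i ∈ D, w i < d := by
    intro i hi
    have := h1 i hi; have := h2 i hi
    simp only [hw]; omega
  have himg : D.image w = Finset.range d := by
    apply Finset.eq_of_subset_of_card_le
    · intro t ht
      obtain ⟨i, hi, rfl⟩ := Finset.mem_image.mp ht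
      exact Finset.mem_range.mpr (hwlt i hi)
    · rw [Finset.card_range, Finset.card_image_of_injOn
        (fun i hi j hj h => hwinj i hi j hj h), hdcard]
  -- sum of cnt over any subset of D is at most maj
  have hcnt_filter : ∀ i ∈ D, cnt i = (D.filter (fun j => i ≤ j)).card := by
    intro i _
    show (D ∩ Finset.Icc i (n - 1)).card = _
    congr 1
    ext j
    simp only [Finset.mem_inter, Finset.mem_Icc, Finset.mem_filter]
    constructor
    · rintro ⟨hj, hij, _⟩; exact ⟨hj, hij⟩
    · rintro ⟨hj, hij⟩; exact ⟨hj, hij, (hDmem j hj).2⟩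
  have hcnt_maj : ∀ S ⊆ D, ∑ i ∈ S, cnt i ≤ majNum σ := by
    intro S hS
    have step1 : ∑ i ∈ S, cnt i ≤ ∑ i ∈ D, cnt i :=
      Finset.sum_le_sum_of_subset hS
    have step2 : ∑ i ∈ D, cnt i = ∑ j ∈ D, (D.filter (fun i => i ≤ j)).card := by
      rw [Finset.sum_congr rfl hcnt_filter]
      simp only [Finset.card_filter]
      exact Finset.sum_comm
    have step3 : ∑ j ∈ D, (D.filter (fun i => i ≤ j)).card ≤ ∑ j ∈ D, j := by
      refine Finset.sum_le_sum fun j _ => ?_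
      calc (D.filter (fun i => i ≤ j)).card ≤ (Finset.Icc 1 j).card := by
            apply Finset.card_le_card
            intro x hx
            have := Finset.mem_filter.mp hx
            exact Finset.mem_Icc.mpr ⟨(hDmem x this.1).1, this.2⟩
        _ = j := by simp [Nat.card_Icc]
    have : majNum σ = ∑ j ∈ D, j := rfl
    omega
  -- dispose of the case m = 0 (needed to avoid n = 1 edge cases below)
  by_cases hm0 : m = 0
  · subst hm0
    rw [starSets_eq, Finset.powersetCard_zero, Finset.sum_singleton]
    have hsm : starMaj σ ∅ = majNum σ := by simp [starMaj]
    rw [hsm, show qbinom q d 0 = 1 from by cases d <;> rfl]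
    simp
  · have hn2 : 2 ≤ n := by omega
    have hdn : d ≤ n - 1 := desNum_le σ
    -- main bijection step
    have key : ∑ S ∈ starSets D m, q ^ (m * (n - 1) + starMaj σ S) =
        ∑ T ∈ (Finset.range d).powersetCard m, q ^ (majNum σ + ∑ t ∈ T, (n - 2 - t)) := by
      rw [starSets_eq]
      refine Finset.sum_bij (fun S _ => S.image w) ?_ ?_ ?_ ?_
      · intro S hS
        obtain ⟨hSD, hScard⟩ := Finset.mem_powersetCard.mp hS
        refine Finset.mem_powersetCard.mpr ⟨?_, ?_⟩
        · rw [← himg]; exact Finset.image_subset_image hSD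
        · rw [Finset.card_image_of_injOn
            (fun i hi j hj h => hwinj i (hSD hi) j (hSD hj) h), hScard]
      · intro S₁ hS₁ S₂ hS₂ h
        have h' : S₁.image w = S₂.image w := h
        have hS₁D := (Finset.mem_powersetCard.mp hS₁).1
        have hS₂D := (Finset.mem_powersetCard.mp hS₂).1
        ext a
        constructor
        · intro ha
          have : w a ∈ S₂.image w := h' ▸ Finset.mem_image_of_mem w ha
          obtain ⟨b, hb, hba⟩ := Finset.mem_image.mp this
          rwa [hwinj b (hS₂D hb) a (hS₁D ha) hba] at hb
        · intro ha
          have : w a ∈ S₁.image w := h' ▸ Finset.mem_image_of_mem w ha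
          obtain ⟨b, hb, hba⟩ := Finset.mem_image.mp this
          rwa [hwinj b (hS₁D hb) a (hS₂D ha) hba] at hb
      · intro T hT
        obtain ⟨hTsub, hTcard⟩ := Finset.mem_powersetCard.mp hT
        have himgT : (D.filter (fun i => w i ∈ T)).image w = T := by
          apply Finset.Subset.antisymm
          · intro t ht
            obtain ⟨i, hi, rfl⟩ := Finset.mem_image.mp ht
            exact (Finset.mem_filter.mp hi).2
          · intro t ht
            have hmem : t ∈ D.image w := by rw [himg]; exact hTsub ht
            obtain ⟨i, hi, rfl⟩ := Finset.mem_image.mp hmem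
            exact Finset.mem_image_of_mem w (Finset.mem_filter.mpr ⟨hi, ht⟩)
        refine ⟨D.filter (fun i => w i ∈ T), ?_, ?_⟩
        · refine Finset.mem_powersetCard.mpr ⟨Finset.filter_subset _ _, ?_⟩
          have := Finset.card_image_of_injOn
            (s := D.filter (fun i => w i ∈ T)) (f := w)
            (fun i hi j hj h => hwinj i (Finset.filter_subset _ _ hi)
              j (Finset.filter_subset _ _ hj) h)
          rw [himgT, hTcard] at this
          exact this.symm
        · exact himgT
      · intro S hS
        have hSD := (Finset.mem_powersetCard.mp hS).1
        have hScard := (Finset.mem_powersetCard.mp hS).2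
        congr 1
        have hs1 : ∑ t ∈ S.image w, (n - 2 - t) = ∑ i ∈ S, (n - 2 - w i) :=
          Finset.sum_image (fun i hi j hj h => hwinj i (hSD hi) j (hSD hj) h)
        have hs2 : ∑ i ∈ S, ((n - 2 - w i) + cnt i) = ∑ i ∈ S, (n - 1) := by
          refine Finset.sum_congr rfl fun i hi => ?_
          have := h1 i (hSD hi); have := h2 i (hSD hi)
          simp only [hw]; omega
        rw [Finset.sum_add_distrib, Finset.sum_const, hScard, smul_eq_mul] at hs2
        have hs3 : ∑ i ∈ S, cnt i ≤ majNum σ := hcnt_maj S hSD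
        have hsm : starMaj σ S = majNum σ - ∑ i ∈ S, cnt i := rfl
        rw [hsm, hs1]
        omega
    -- assemble
    have lhs_eq : q ^ (m * (n - 1)) * ∑ S ∈ starSets D m, q ^ starMaj σ S =
        ∑ S ∈ starSets D m, q ^ (m * (n - 1) + starMaj σ S) := by
      rw [Finset.mul_sum]
      exact Finset.sum_congr rfl fun S _ => (pow_add q _ _).symm
    rw [lhs_eq, key]
    have rhs_eq : ∑ T ∈ (Finset.range d).powersetCard m,
        q ^ (majNum σ + ∑ t ∈ T, (n - 2 - t)) =
        q ^ majNum σ * ∑ T ∈ (Finset.range d).powersetCard m,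
          q ^ (∑ t ∈ T, (n - 2 - t)) := by
      rw [Finset.mul_sum]
      exact Finset.sum_congr rfl fun T _ => pow_add q _ _
    rw [rhs_eq, gsum q (n - 2) d (by omega) m]
    have he : n - 2 + 1 - d = n - 1 - d := by omega
    rw [he, pow_add]
    ring

/-- For all 1 ≤ k ≤ n and q in a commutative ring,
q^{(n−k)(n−1)} · Σ_{(σ,S)∈𝔖^>_{n,n−k}} q^{maj((σ,S))}
  = Σ_{i=1}^k q^{C(n−k,2)+(n−k)(i−1)} · binom_q(n−i,n−k) · A_{n,n−i}(q). -/
theorem statement9 {R : Type*} [CommRing R] (q : R) (n k : ℕ) (hk1 : 1 ≤ k) (hk2 : k ≤ n) :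
    q ^ ((n - k) * (n - 1)) *
        (∑ σ : Equiv.Perm (Fin n), ∑ S ∈ starSets (DesSet σ) (n - k), q ^ starMaj σ S) =
      ∑ i ∈ Finset.Icc 1 k,
        q ^ (Nat.choose (n - k) 2 + (n - k) * (i - 1)) * qbinom q (n - i) (n - k) *
          eulerA q n (n - i) := by
  have hn : 1 ≤ n := le_trans hk1 hk2
  set m := n - k with hmdef
  have hm : m ≤ n - 1 := by omega
  -- Step 1: apply the per-permutation lemma
  have step1 : q ^ (m * (n - 1)) *
      (∑ σ : Equiv.Perm (Fin n), ∑ S ∈ starSets (DesSet σ) m, q ^ starMaj σ S) =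
      ∑ σ : Equiv.Perm (Fin n),
        q ^ (m * (n - 1 - desNum σ) + m.choose 2 + majNum σ) * qbinom q (desNum σ) m := by
    rw [Finset.mul_sum]
    exact Finset.sum_congr rfl fun σ _ => innerSumAux q hn σ m hm
  rw [step1]
  -- Step 2: fiber by the number of descents
  have hmaps : ∀ σ : Equiv.Perm (Fin n), σ ∈ (Finset.univ : Finset (Equiv.Perm (Fin n))) →
      desNum σ ∈ Finset.range n := fun σ _ =>
    Finset.mem_range.mpr (lt_of_le_of_lt (desNum_le σ) (by omega))
  rw [← Finset.sum_fiberwise_of_maps_to hmaps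
    (fun σ => q ^ (m * (n - 1 - desNum σ) + m.choose 2 + majNum σ) * qbinom q (desNum σ) m)]
  -- Step 3: evaluate each fiber
  have step3 : ∀ d ∈ Finset.range n,
      ∑ σ ∈ (Finset.univ : Finset (Equiv.Perm (Fin n))).filter (fun σ => desNum σ = d),
        q ^ (m * (n - 1 - desNum σ) + m.choose 2 + majNum σ) * qbinom q (desNum σ) m =
      q ^ (m * (n - 1 - d) + m.choose 2) * qbinom q d m * eulerA q n d := by
    intro d _
    rw [eulerA, Finset.mul_sum]
    refine Finset.sum_congr rfl fun σ hσ => ?_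
    have hdσ : desNum σ = d := (Finset.mem_filter.mp hσ).2
    rw [hdσ, pow_add]
    ring
  rw [Finset.sum_congr rfl step3]
  -- Step 4: restrict to the nonzero terms d ∈ [n-k, n-1]
  have step4 : ∑ d ∈ Finset.range n,
      q ^ (m * (n - 1 - d) + m.choose 2) * qbinom q d m * eulerA q n d =
      ∑ d ∈ Finset.Icc (n - k) (n - 1),
        q ^ (m * (n - 1 - d) + m.choose 2) * qbinom q d m * eulerA q n d := by
    refine (Finset.sum_subset ?_ ?_).symm
    · intro d hd
      have := Finset.mem_Icc.mp hd
      exact Finset.mem_range.mpr (by omega)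
    · intro d hd hd'
      have hdn : d < n := Finset.mem_range.mp hd
      have : d < n - k := by
        simp only [Finset.mem_Icc, not_and_or, not_le] at hd'
        omega
      rw [qbinom_zero_of_lt q d m (by omega)]
      ring
  rw [step4]
  -- Step 5: reindex d = n - i
  refine Finset.sum_bij' (fun d _ => n - d) (fun i _ => n - i) ?_ ?_ ?_ ?_ ?_
  · intro d hd
    have := Finset.mem_Icc.mp hd
    exact Finset.mem_Icc.mpr ⟨by omega, by omega⟩
  · intro i hi
    have := Finset.mem_Icc.mp hi
    exact Finset.mem_Icc.mpr ⟨by omega, by omega⟩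
  · intro d hd
    have := Finset.mem_Icc.mp hd
    omega
  · intro i hi
    have := Finset.mem_Icc.mp hi
    omega
  · intro d hd
    have hdmem := Finset.mem_Icc.mp hd
    have h1 : n - (n - d) = d := by omega
    have h2 : m * (n - 1 - d) + m.choose 2 = m.choose 2 + m * (n - d - 1) := by
      have : n - 1 - d = n - d - 1 := by omega
      rw [this, Nat.add_comm]
    rw [h1, h2]
end
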